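/- arXiv:1802.07632 — 5 statements merged into one kernel-verified Lean document; each statement's English description precedes it below -/
import Mathlib

section
/- Let G = (V,E) be a finite simple graph, let t_1 ∈ V, and let t_2,…,t_ℓ be ℓ−1 distinct neighbours of t_1 in G. Suppose there exists an ℓ-connected-partition V = V_1 ∪ … ∪ V_ℓ such that for all j ∈ [ℓ], t_j ∈ V_j, and the total degree Σ_{v∈V_j} deg_G(v) is at most D. For each j let τ_j be an arbitrary spanning tree of G[V_j], and for 2 ≤ j ≤ ℓ let e_j denote the edge {t_1,t_j}. Then τ := (∪_{j=1}^ℓ τ_j) ∪ (∪_{j=2}^ℓ {e_j}) is a spanning tree of G whose congestion is at most D. -/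
open SimpleGraph

namespace STCPaper

variable {V : Type*}

/-- The number of edges of `G` with exactly one endpoint in `S`. -/
noncomputable def cutCount (G : SimpleGraph V) (S : Set V) : ℕ :=
  {e ∈ G.edgeSet | ∃ a b, e = s(a, b) ∧ a ∈ S ∧ b ∉ S}.ncard

/-- The degree of a vertex. -/
noncomputable def deg (G : SimpleGraph V) (v : V) : ℕ := (G.neighborSet v).ncard

/-- The number of edges of a graph. -/
noncomputable def numEdges (G : SimpleGraph V) : ℕ := G.edgeSet.ncard

/-- `T` is a spanning tree of `G`. -/
def IsSpanningTree (G T : SimpleGraph V) : Prop := T ≤ G ∧ T.IsTree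

/-- The congestion of a spanning tree `T` of `G`: the maximum, over tree edges `e = {u,v}`,
of the number of edges of `G` crossing the cut induced by deleting `e` from `T`. -/
noncomputable def congestion (G T : SimpleGraph V) : ℕ :=
  sSup {c | ∃ u v, T.Adj u v ∧
    c = cutCount G {w | (T.deleteEdges {s(u, v)}).Reachable w u}}

/-- The spanning tree congestion of `G`. -/
noncomputable def STC (G : SimpleGraph V) : ℕ :=
  sInf {c | ∃ T, IsSpanningTree G T ∧ c = congestion G T}

/-- `G` is `k`-(vertex-)connected: it has more than `k` vertices, and deleting any
set of fewer than `k` vertices leaves a connected graph. -/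
def IsKConnected [Fintype V] (G : SimpleGraph V) (k : ℕ) : Prop :=
  k < Fintype.card V ∧ ∀ S : Set V, S.ncard < k → (G.induce Sᶜ).Connected

/-- A `k`-connected-partition: a partition of the vertex set into `k` nonempty parts,
each inducing a connected subgraph. -/
def IsConnectedPartition [Fintype V] [DecidableEq V] (G : SimpleGraph V) {k : ℕ}
    (P : Fin k → Finset V) : Prop :=
  (∀ j, (P j).Nonempty) ∧
  (∀ i j, i ≠ j → Disjoint (P i) (P j)) ∧
  Finset.univ.biUnion P = Finset.univ ∧
  ∀ j, (G.induce (↑(P j) : Set V)).Connected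

/-- The number of vertices outside `S` adjacent to some vertex of `S`. -/
noncomputable def nbrCount (G : SimpleGraph V) (S : Set V) : ℕ :=
  {v | v ∉ S ∧ ∃ u ∈ S, G.Adj u v}.ncard

/-- The number of vertices in `W` adjacent to some vertex of `S'`. -/
noncomputable def nbrWithinCount (G : SimpleGraph V) (S' W : Set V) : ℕ :=
  {v ∈ W | ∃ u ∈ S', G.Adj u v}.ncard

/-- The Erdős–Rényi measure: product Bernoulli(p) measure on potential edges. -/
noncomputable def erdosRenyi (n : ℕ) (p : ℝ) :
    MeasureTheory.Measure (Sym2 (Fin n) → Bool) :=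
  MeasureTheory.Measure.pi fun _ =>
    (PMF.bernoulli (min (Real.toNNReal p) 1) (min_le_right _ _)).toMeasure

/-- The simple graph sampled from an outcome `ω`. -/
def graphOf {n : ℕ} (ω : Sym2 (Fin n) → Bool) : SimpleGraph (Fin n) :=
  SimpleGraph.fromEdgeSet {e | ω e = true}

end STCPaper

section AuxLemmas

variable {V : Type*}

lemma aux_reach_closed {H : SimpleGraph V} {A : Set V}
    (hA : ∀ ⦃w x : V⦄, w ∈ A → H.Adj w x → x ∈ A) :
    ∀ {a b : V}, H.Walk a b → a ∈ A → b ∈ A := by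
  intro a b p
  induction p with
  | nil => exact id
  | cons h _ ih => exact fun ha => ih (hA ha h)

lemma aux_reach_closed' {H : SimpleGraph V} {A : Set V}
    (hA : ∀ ⦃w x : V⦄, w ∈ A → H.Adj w x → x ∈ A) {a b : V}
    (h : H.Reachable a b) (ha : a ∈ A) : b ∈ A := by
  obtain ⟨p⟩ := h; exact aux_reach_closed hA p ha

lemma aux_delete_or {H : SimpleGraph V} (u v : V) :
    ∀ {w z : V}, H.Walk w z →
      (H.deleteEdges {s(u, v)}).Reachable w z ∨
      (H.deleteEdges {s(u, v)}).Reachable w u ∨ (H.deleteEdges {s(u, v)}).Reachable w v := by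
  intro w z p
  induction p with
  | nil => exact Or.inl (Reachable.refl _)
  | cons h p ih =>
    rename_i a c _
    by_cases he : s(a, c) = s(u, v)
    · rw [Sym2.eq_iff] at he
      rcases he with ⟨rfl, rfl⟩ | ⟨rfl, rfl⟩
      · exact Or.inr (Or.inl (Reachable.refl _))
      · exact Or.inr (Or.inr (Reachable.refl _))
    · have hadj : (H.deleteEdges {s(u, v)}).Adj a c := by
        rw [SimpleGraph.deleteEdges_adj]; exact ⟨h, by simpa using he⟩
      rcases ih with h1 | h1 | h1
      · exact Or.inl (hadj.reachable.trans h1)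
      · exact Or.inr (Or.inl (hadj.reachable.trans h1))
      · exact Or.inr (Or.inr (hadj.reachable.trans h1))

lemma aux_ncard_biUnion_le {α ι : Type*} [Finite α] (A : Finset ι) (f : ι → Set α) :
    (⋃ i ∈ A, f i).ncard ≤ ∑ i ∈ A, (f i).ncard := by
  classical
  induction A using Finset.induction with
  | empty => simp
  | insert _ _ hx ih =>
    rename_i a s
    rw [Finset.set_biUnion_insert, Finset.sum_insert hx]
    exact le_trans (Set.ncard_union_le _ _) (Nat.add_le_add_left ih _)

open STCPaper in
lemma aux_cut_compl (G : SimpleGraph V) (S : Set V) :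
    cutCount G Sᶜ = cutCount G S := by
  unfold cutCount
  congr 1
  ext e
  constructor
  · rintro ⟨he, a, b, rfl, ha, hb⟩
    exact ⟨he, b, a, Sym2.eq_swap, by simpa using hb, by simpa using ha⟩
  · rintro ⟨he, a, b, rfl, ha, hb⟩
    exact ⟨he, b, a, Sym2.eq_swap, by simpa using hb, by simpa using ha⟩

open STCPaper in
lemma aux_cut_le [Fintype V] (G : SimpleGraph V) (A : Finset V) (S : Set V)
    (hS : S ⊆ ↑A) : cutCount G S ≤ ∑ v ∈ A, deg G v := by
  classical
  have hsub : {e ∈ G.edgeSet | ∃ a b, e = s(a, b) ∧ a ∈ S ∧ b ∉ S} ⊆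
      ⋃ v ∈ A, G.incidenceSet v := by
    rintro e ⟨he, a, b, rfl, ha, hb⟩
    exact Set.mem_iUnion₂.mpr ⟨a, hS ha, he, Sym2.mem_mk_left a b⟩
  calc cutCount G S ≤ (⋃ v ∈ A, G.incidenceSet v).ncard :=
        Set.ncard_le_ncard hsub (Set.toFinite _)
    _ ≤ ∑ v ∈ A, (G.incidenceSet v).ncard := aux_ncard_biUnion_le A _
    _ = ∑ v ∈ A, deg G v := by
        refine Finset.sum_congr rfl fun v _ => ?_
        rw [deg, ← Nat.card_coe_set_eq, ← Nat.card_coe_set_eq]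
        exact Nat.card_congr (G.incidenceSetEquivNeighborSet v)

end AuxLemmas

open STCPaper in
/-- Gluing spanning trees of the parts of an `ℓ`-connected-partition along a star at `t 0`
yields a spanning tree of `G` with congestion at most `D`. -/
theorem stmt_3 {V : Type*} [Fintype V] [DecidableEq V]
    (G : SimpleGraph V) (ℓ : ℕ) (hℓ : 0 < ℓ)
    (t : Fin ℓ → V) (ht : Function.Injective t)
    (hadj : ∀ j : Fin ℓ, j ≠ ⟨0, hℓ⟩ → G.Adj (t ⟨0, hℓ⟩) (t j))
    (P : Fin ℓ → Finset V) (hP : IsConnectedPartition G P)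
    (htP : ∀ j, t j ∈ P j)
    (D : ℕ) (hD : ∀ j, ∑ v ∈ P j, deg G v ≤ D)
    (τ : Fin ℓ → SimpleGraph V)
    (hτle : ∀ j, τ j ≤ G)
    (hτsupp : ∀ j, ∀ a b : V, (τ j).Adj a b → a ∈ P j ∧ b ∈ P j)
    (hτtree : ∀ j, ((τ j).induce (↑(P j) : Set V)).IsTree) :
    IsSpanningTree G ((⨆ j, τ j) ⊔
        SimpleGraph.fromEdgeSet {e | ∃ j : Fin ℓ, j ≠ ⟨0, hℓ⟩ ∧ e = s(t ⟨0, hℓ⟩, t j)}) ∧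
      congestion G ((⨆ j, τ j) ⊔
        SimpleGraph.fromEdgeSet {e | ∃ j : Fin ℓ, j ≠ ⟨0, hℓ⟩ ∧ e = s(t ⟨0, hℓ⟩, t j)}) ≤ D := by
  classical
  obtain ⟨hPne, hPdis, hPcover, hPconn⟩ := hP
  set i0 : Fin ℓ := ⟨0, hℓ⟩ with hi0def
  set T : SimpleGraph V := ((⨆ j, τ j) ⊔
      SimpleGraph.fromEdgeSet {e | ∃ j : Fin ℓ, j ≠ i0 ∧ e = s(t i0, t j)}) with hTdef
  -- basic partition facts
  have hmem : ∀ w : V, ∃ j, w ∈ P j := by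
    intro w
    have hw : w ∈ Finset.univ.biUnion P := by rw [hPcover]; exact Finset.mem_univ w
    obtain ⟨j, _, hj⟩ := Finset.mem_biUnion.mp hw
    exact ⟨j, hj⟩
  have huniq : ∀ {i j : Fin ℓ} {w : V}, w ∈ P i → w ∈ P j → i = j := by
    intro i j w hi hj
    by_contra h
    exact Finset.disjoint_left.mp (hPdis i j h) hi hj
  have hstar_part : ∀ {x : V} {i j : Fin ℓ}, i ≠ i0 → (x = t i0 ∨ x = t i) → x ∈ P j →
      x = t j := by
    rintro x i j hi (rfl | rfl) hx
    · exact congrArg t (huniq (htP i0) hx)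
    · exact congrArg t (huniq (htP i) hx)
  -- adjacency characterization of T
  have hT : ∀ {a b : V}, T.Adj a b ↔
      ((∃ j, (τ j).Adj a b) ∨ ((∃ j, j ≠ i0 ∧ s(a, b) = s(t i0, t j)) ∧ a ≠ b)) := by
    intro a b
    rw [hTdef]
    simp only [sup_adj, iSup_adj, fromEdgeSet_adj, Set.mem_setOf_eq]
  have hτT : ∀ j, τ j ≤ T := fun j => le_trans (le_iSup τ j) le_sup_left
  have hTle : T ≤ G := by
    rw [hTdef]
    refine sup_le (iSup_le hτle) ?_
    intro a b hab
    obtain ⟨⟨j, hj, he⟩, hne⟩ := hab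
    rcases Sym2.eq_iff.mp he with ⟨rfl, rfl⟩ | ⟨rfl, rfl⟩
    · exact hadj j hj
    · exact (hadj j hj).symm
  have hstarAdj : ∀ j, j ≠ i0 → T.Adj (t i0) (t j) := fun j hj =>
    hT.mpr (Or.inr ⟨⟨j, hj, rfl⟩, fun hh => hj (ht hh).symm⟩)
  -- connectivity
  have hreach : ∀ j, ∀ w ∈ P j, T.Reachable w (t j) := by
    intro j w hw
    have h1 : ((τ j).induce (↑(P j) : Set V)).Reachable ⟨w, hw⟩ ⟨t j, htP j⟩ :=
      (hτtree j).1.preconnected _ _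
    have h2 := h1.map (SimpleGraph.Embedding.induce (↑(P j) : Set V)).toHom
    exact Reachable.mono (hτT j) h2
  have hreach0 : ∀ w, T.Reachable w (t i0) := by
    intro w
    obtain ⟨j, hw⟩ := hmem w
    refine (hreach j w hw).trans ?_
    by_cases h : j = i0
    · subst h; exact Reachable.refl _
    · exact (hstarAdj j h).symm.reachable
  have hpre : T.Preconnected := fun a b => (hreach0 a).trans (hreach0 b).symm
  have hconn : T.Connected := by
    rw [SimpleGraph.connected_iff]
    exact ⟨hpre, ⟨t i0⟩⟩
  -- main per-edge structural lemma
  have key : ∀ u v : V, T.Adj u v →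
      ¬(T.deleteEdges {s(u, v)}).Reachable u v ∧
      ∃ j, {w | (T.deleteEdges {s(u, v)}).Reachable w u} ⊆ (↑(P j) : Set V) ∨
           {w | (T.deleteEdges {s(u, v)}).Reachable w u}ᶜ ⊆ (↑(P j) : Set V) := by
    intro u v huv
    set T' : SimpleGraph V := T.deleteEdges {s(u, v)} with hT'def
    have hT'T : ∀ {a b : V}, T'.Adj a b → T.Adj a b ∧ s(a, b) ≠ s(u, v) := by
      intro a b h
      rw [hT'def, SimpleGraph.deleteEdges_adj] at h
      simpa using h
    have hor : ∀ w, T'.Reachable w u ∨ T'.Reachable w v := by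
      intro w
      obtain ⟨p⟩ := hpre w u
      rcases aux_delete_or u v p with h | h | h
      exacts [Or.inl h, Or.inl h, Or.inr h]
    rcases hT.mp huv with ⟨j, hj⟩ | ⟨⟨i, hi, he⟩, hne⟩
    · -- Case A: the deleted edge is an edge of τ j
      obtain ⟨huP, hvP⟩ := hτsupp j u v hj
      have hus : u ∈ (↑(P j) : Set V) := huP
      have hvs : v ∈ (↑(P j) : Set V) := hvP
      set R : SimpleGraph V := (τ j).deleteEdges {s(u, v)} with hRdef
      have hRadj : ∀ {a b : V}, R.Adj a b → (τ j).Adj a b ∧ s(a, b) ≠ s(u, v) := by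
        intro a b h
        rw [hRdef, SimpleGraph.deleteEdges_adj] at h
        simpa using h
      have hRR : ∀ {a b : V}, (τ j).Adj a b → s(a, b) ≠ s(u, v) → R.Adj a b := by
        intro a b h1 h2
        rw [hRdef, SimpleGraph.deleteEdges_adj]
        exact ⟨h1, by simpa using h2⟩
      -- the deleted edge is a bridge of the induced tree
      have hbr : ¬(((τ j).induce (↑(P j) : Set V)) \
          SimpleGraph.fromEdgeSet {s((⟨u, hus⟩ : (↑(P j) : Set V)), ⟨v, hvs⟩)}).Reachable
            ⟨u, hus⟩ ⟨v, hvs⟩ := by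
        have hac := (hτtree j).2
        rw [isAcyclic_iff_forall_adj_isBridge] at hac
        have hadj' : ((τ j).induce (↑(P j) : Set V)).Adj ⟨u, hus⟩ ⟨v, hvs⟩ := hj
        exact isBridge_iff.mp (hac hadj')
      have hlift : ∀ {a b : V}, R.Walk a b → ∀ ha : a ∈ (↑(P j) : Set V),
          ∃ hb : b ∈ (↑(P j) : Set V),
            (((τ j).induce (↑(P j) : Set V)) \
              SimpleGraph.fromEdgeSet {s((⟨u, hus⟩ : (↑(P j) : Set V)), ⟨v, hvs⟩)}).Reachable
                ⟨a, ha⟩ ⟨b, hb⟩ := by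
        intro a b p
        induction p with
        | nil => exact fun ha => ⟨ha, Reachable.refl _⟩
        | cons h p ih =>
          rename_i x y _
          intro hx
          obtain ⟨hadj', hne'⟩ := hRadj h
          have hy : y ∈ (↑(P j) : Set V) := (hτsupp j x y hadj').2
          obtain ⟨hb, hr⟩ := ih hy
          refine ⟨hb, Reachable.trans (SimpleGraph.Adj.reachable ?_) hr⟩
          rw [SimpleGraph.sdiff_adj]
          refine ⟨hadj', ?_⟩
          rw [SimpleGraph.fromEdgeSet_adj]
          rintro ⟨h1, -⟩
          apply hne'
          have := congrArg (Sym2.map (Subtype.val : (↑(P j) : Set V) → V)) h1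
          simpa using this
      have notRuv : ¬R.Reachable u v := by
        intro h
        obtain ⟨p⟩ := h
        obtain ⟨hb, hr⟩ := hlift p hus
        exact hbr hr
      -- closure lemma
      have hclosed : ∀ (y : V), ¬R.Reachable (t j) y →
          ∀ ⦃w x : V⦄, w ∈ {z | z ∈ (↑(P j) : Set V) ∧ R.Reachable z y} → T'.Adj w x →
            x ∈ {z | z ∈ (↑(P j) : Set V) ∧ R.Reachable z y} := by
        rintro y hy w x ⟨hwP, hwy⟩ hwx
        obtain ⟨hTwx, hnewx⟩ := hT'T hwx
        rcases hT.mp hTwx with ⟨k, hτk⟩ | ⟨⟨m, hm, hem⟩, hxne⟩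
        · have hkj : k = j := huniq (hτsupp k _ _ hτk).1 hwP
          subst hkj
          have hR : R.Adj w x := hRR hτk hnewx
          exact ⟨(hτsupp _ _ _ hτk).2, hR.symm.reachable.trans hwy⟩
        · exfalso
          have hw : w = t j := by
            rcases Sym2.eq_iff.mp hem with ⟨h1, -⟩ | ⟨h1, -⟩
            · exact hstar_part hm (Or.inl h1) hwP
            · exact hstar_part hm (Or.inr h1) hwP
          exact hy (hw ▸ hwy)
      by_cases hju : R.Reachable (t j) u
      · have hjv : ¬R.Reachable (t j) v := fun hv => notRuv (hju.symm.trans hv)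
        constructor
        · intro hr
          exact notRuv (aux_reach_closed' (hclosed v hjv) hr.symm
            ⟨hvs, Reachable.refl _⟩).2
        · refine ⟨j, Or.inr ?_⟩
          intro w hw
          rcases hor w with h | h
          · exact absurd h hw
          · exact (aux_reach_closed' (hclosed v hjv) h.symm ⟨hvs, Reachable.refl _⟩).1
      · constructor
        · intro hr
          exact notRuv (aux_reach_closed' (hclosed u hju) hr
            ⟨hus, Reachable.refl _⟩).2.symm
        · refine ⟨j, Or.inl ?_⟩
          intro w hw
          exact (aux_reach_closed' (hclosed u hju) (Reachable.symm hw)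
            ⟨hus, Reachable.refl _⟩).1
    · -- Case B: the deleted edge is a star edge
      have hti : (t i) ∈ (↑(P i) : Set V) := htP i
      have hPclosed : ∀ ⦃w x : V⦄, w ∈ (↑(P i) : Set V) → T'.Adj w x →
          x ∈ (↑(P i) : Set V) := by
        intro w x hw hwx
        obtain ⟨hTwx, hnewx⟩ := hT'T hwx
        rcases hT.mp hTwx with ⟨k, hτk⟩ | ⟨⟨m, hm, hem⟩, hxne⟩
        · have hki : k = i := huniq (hτsupp k _ _ hτk).1 hw
          subst hki
          exact (hτsupp _ _ _ hτk).2
        · exfalso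
          have hw' : w = t i := by
            rcases Sym2.eq_iff.mp hem with ⟨h1, -⟩ | ⟨h1, -⟩
            · exact hstar_part hm (Or.inl h1) hw
            · exact hstar_part hm (Or.inr h1) hw
          rcases Sym2.eq_iff.mp hem with ⟨h1, h2⟩ | ⟨h1, h2⟩
          · exact hi (ht (hw'.symm.trans h1))
          · have hmi : m = i := ht (h1.symm.trans hw')
            subst hmi
            apply hnewx
            rw [h1, h2, he]
            exact Sym2.eq_swap
      have hsubi : ∀ w, T'.Reachable (t i) w → w ∈ (↑(P i) : Set V) := fun w h =>
        aux_reach_closed' hPclosed h hti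
      have ht0not : t i0 ∉ (↑(P i) : Set V) := fun hmem' =>
        hi (huniq hmem' (htP i0))
      rcases Sym2.eq_iff.mp he with ⟨hu1, hv1⟩ | ⟨hu1, hv1⟩
      · -- u = t i0, v = t i
        constructor
        · intro hr
          exact ht0not (hu1 ▸ hsubi u (hv1 ▸ hr.symm))
        · refine ⟨i, Or.inr ?_⟩
          intro w hw
          rcases hor w with h | h
          · exact absurd h hw
          · exact hsubi w (hv1 ▸ h.symm)
      · -- u = t i, v = t i0
        constructor
        · intro hr
          exact ht0not (hv1 ▸ hsubi v (hu1 ▸ hr))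
        · refine ⟨i, Or.inl ?_⟩
          intro w hw
          exact hsubi w (hu1 ▸ (Reachable.symm hw))
  refine ⟨⟨hTle, hconn, ?_⟩, ?_⟩
  · -- acyclicity via bridges
    rw [isAcyclic_iff_forall_adj_isBridge]
    intro a b hab
    exact isBridge_iff.mpr (key a b hab).1
  · -- congestion bound
    rw [congestion]
    apply csSup_le'
    rintro c ⟨u, v, huv, rfl⟩
    obtain ⟨-, j, hsub | hsub⟩ := key u v huv
    · exact le_trans (aux_cut_le G (P j) _ hsub) (hD j)
    · rw [← aux_cut_compl]
      exact le_trans (aux_cut_le G (P j) _ hsub) (hD j)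
end

section
/- There exist a constant c > 0 and an integer n₀ such that for every integer n ≥ n₀ and every integer m satisfying max{16·n·ln n, 100·n} ≤ m ≤ n²/2, there exists a connected finite simple graph G with at most 3n vertices, with number of edges between m and 7m, whose spanning tree congestion satisfies STC(G) ≥ c·√(m·n). -/
open SimpleGraph

set_option linter.unusedSectionVars false
set_option linter.unusedVariables false
set_option maxHeartbeats 2000000

namespace STCProof
open STCPaper

open STCPaper

variable {V : Type*} [Fintype V]

lemma connected_deleteEdges_of_reach {G : SimpleGraph V} {u v : V}
    (hG : G.Connected)
    (hnb : (G.deleteEdges {s(u,v)}).Reachable u v) :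
    (G.deleteEdges {s(u,v)}).Connected := by
  have key : ∀ a c : V, (p : G.Walk a c) → (G.deleteEdges {s(u,v)}).Reachable a c := by
    intro a c p
    induction p with
    | nil => exact Reachable.refl _
    | cons h q ih =>
      rename_i a' b' c'
      refine Reachable.trans ?_ ih
      by_cases he : s(a', b') = s(u,v)
      · rw [Sym2.eq_iff] at he
        rcases he with ⟨rfl, rfl⟩ | ⟨rfl, rfl⟩
        · exact hnb
        · exact hnb.symm
      · exact (SimpleGraph.deleteEdges_adj.mpr ⟨h, he⟩).reachable
  rw [SimpleGraph.connected_iff]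
  refine ⟨fun a c => ?_, hG.nonempty⟩
  exact key a c (hG.preconnected a c).some

lemma exists_spanning_tree_aux : ∀ (k : ℕ) (G : SimpleGraph V),
    G.edgeSet.ncard ≤ k → G.Connected → ∃ T, IsSpanningTree G T := by
  intro k
  induction k with
  | zero =>
    intro G hcard hG
    refine ⟨G, le_refl _, hG, ?_⟩
    intro w c hc
    exfalso
    have hlen := hc.three_le_length
    have he : c.edges ≠ [] := by
      have : c.edges.length = c.length := SimpleGraph.Walk.length_edges c
      intro h
      rw [h] at this
      simp at this
      omega
    obtain ⟨e, he'⟩ := List.exists_mem_of_ne_nil _ he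
    have : e ∈ G.edgeSet := SimpleGraph.Walk.edges_subset_edgeSet _ he'
    have hpos : 0 < G.edgeSet.ncard :=
      (Set.ncard_pos (Set.toFinite _)).mpr ⟨e, this⟩
    omega
  | succ k ih =>
    intro G hcard hG
    by_cases hac : G.IsAcyclic
    · exact ⟨G, le_refl _, hG, hac⟩
    · rw [isAcyclic_iff_forall_adj_isBridge] at hac
      push_neg at hac
      obtain ⟨x, y, hxy, hnb⟩ := hac
      rw [isBridge_iff] at hnb
      push_neg at hnb
      have hreach : (G.deleteEdges {s(x,y)}).Reachable x y := hnb
      have hconn' := connected_deleteEdges_of_reach hG hreach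
      have hsub : (G.deleteEdges {s(x,y)}).edgeSet = G.edgeSet \ {s(x,y)} := by
        simp [SimpleGraph.deleteEdges]
      have hlt : (G.deleteEdges {s(x,y)}).edgeSet.ncard ≤ k := by
        rw [hsub]
        have : (G.edgeSet \ {s(x,y)}).ncard = G.edgeSet.ncard - 1 := by
          rw [← Set.ncard_singleton s(x,y)]
          refine Set.ncard_diff ?_ (Set.toFinite _)
          simpa using hxy
        have hpos : 0 < G.edgeSet.ncard :=
          (Set.ncard_pos (Set.toFinite _)).mpr ⟨s(x,y), hxy⟩
        omega
      obtain ⟨T, hTle, hT⟩ := ih _ hlt hconn'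
      exact ⟨T, hTle.trans (SimpleGraph.deleteEdges_le _), hT⟩

lemma exists_spanning_tree (G : SimpleGraph V) (hG : G.Connected) :
    ∃ T, IsSpanningTree G T :=
  exists_spanning_tree_aux _ G le_rfl hG

lemma cutCount_le (G : SimpleGraph V) (S : Set V) :
    cutCount G S ≤ (Set.univ : Set (Sym2 V)).ncard := by
  classical
  exact Set.ncard_le_ncard (Set.subset_univ _) (Set.toFinite _)

lemma le_congestion {G T : SimpleGraph V} {u v : V} (hadj : T.Adj u v) {C : ℕ}
    (hC : C ≤ cutCount G {w | (T.deleteEdges {s(u, v)}).Reachable w u}) :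
    C ≤ congestion G T := by
  refine hC.trans (le_csSup ?_ ⟨u, v, hadj, rfl⟩)
  refine ⟨(Set.univ : Set (Sym2 V)).ncard, ?_⟩
  rintro c ⟨a, b, -, rfl⟩
  exact cutCount_le G _

lemma le_STC {G : SimpleGraph V} (hG : G.Connected) {C : ℕ}
    (h : ∀ T, IsSpanningTree G T → C ≤ congestion G T) : C ≤ STC G := by
  obtain ⟨T0, hT0⟩ := exists_spanning_tree G hG
  refine le_csInf ⟨congestion G T0, T0, hT0, rfl⟩ ?_
  rintro c ⟨T, hT, rfl⟩
  exact h T hT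

-- cut lower bound via explicit finset of crossing edges
lemma le_cutCount (G : SimpleGraph V) (S : Set V) (F : Finset (Sym2 V))
    (h : ∀ e ∈ F, e ∈ G.edgeSet ∧ ∃ a b, e = s(a,b) ∧ a ∈ S ∧ b ∉ S) :
    F.card ≤ cutCount G S := by
  rw [← Set.ncard_coe_finset F]
  exact Set.ncard_le_ncard (fun e he => h e he) (Set.toFinite _)




variable {V : Type*}

/-- The side of the tree edge `s(u,v)` containing `u`. -/
def side (T : SimpleGraph V) (u v : V) : Set V :=
  {w | (T.deleteEdges {s(u, v)}).Reachable w u}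

lemma mem_side_self (T : SimpleGraph V) (u v : V) : u ∈ side T u v :=
  Reachable.refl _

lemma not_reach_of_tree {T : SimpleGraph V} (hT : T.IsTree) {u v : V} (h : T.Adj u v) :
    ¬ (T.deleteEdges {s(u,v)}).Reachable u v := by
  have := (isAcyclic_iff_forall_adj_isBridge.mp hT.2) h
  rw [isBridge_iff] at this
  exact this

lemma not_mem_side {T : SimpleGraph V} (hT : T.IsTree) {u v : V} (h : T.Adj u v) :
    v ∉ side T u v := by
  intro hv
  exact not_reach_of_tree hT h hv.symm

lemma side_union {T : SimpleGraph V} (hT : T.IsTree) {u v : V} (h : T.Adj u v) (w : V) :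
    w ∈ side T u v ∨ w ∈ side T v u := by
  have aux : ∀ (x z : V) (_ : T.Walk x z),
      (z ∈ side T u v ∨ z ∈ side T v u) → (x ∈ side T u v ∨ x ∈ side T v u) := by
    intro x z p
    induction p with
    | nil => exact id
    | cons hadj q ih =>
      rename_i a b c
      intro hc
      have hb := ih hc
      by_cases he : s(a, b) = s(u, v)
      · rw [Sym2.eq_iff] at he
        rcases he with ⟨h5, h6⟩ | ⟨h5, h6⟩
        · exact Or.inl (by rw [h5]; exact mem_side_self T u v)
        · exact Or.inr (by rw [h5]; exact mem_side_self T v u)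
      · rcases hb with hb | hb
        · exact Or.inl (((SimpleGraph.deleteEdges_adj.mpr
            ⟨hadj, by simpa using he⟩).reachable).trans hb)
        · have he' : s(a, b) ≠ s(v, u) := by
            rw [(Sym2.eq_swap : s(v,u) = s(u,v))]
            exact he
          exact Or.inr (((SimpleGraph.deleteEdges_adj.mpr
            ⟨hadj, by simpa using he'⟩).reachable).trans hb)
  obtain ⟨p⟩ := hT.1.preconnected w u
  exact aux w u p (Or.inl (mem_side_self T u v))

lemma side_disjoint {T : SimpleGraph V} (hT : T.IsTree) {u v : V} (h : T.Adj u v) (w : V) :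
    ¬ (w ∈ side T u v ∧ w ∈ side T v u) := by
  rintro ⟨h1, h2⟩
  have hs : s(v, u) = s(u, v) := Sym2.eq_swap
  rw [side, Set.mem_setOf_eq, hs] at h2
  exact not_reach_of_tree hT h (h1.symm.trans h2)

lemma side_compl {T : SimpleGraph V} (hT : T.IsTree) {u v : V} (h : T.Adj u v) :
    side T v u = (side T u v)ᶜ := by
  ext w
  constructor
  · intro hw hw'
    exact side_disjoint hT h w ⟨hw', hw⟩
  · intro hw
    rcases side_union hT h w with h1 | h1
    · exact absurd h1 hw
    · exact h1

/-- Pieces at a vertex: the piece of `w₂` is inside the complement-side of the `v-w₁` edge. -/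
lemma pieces_disjoint {T : SimpleGraph V} (hT : T.IsTree) {v w₁ w₂ : V}
    (h1 : T.Adj v w₁) (h2 : T.Adj v w₂) (hne : w₁ ≠ w₂) :
    ∀ x, x ∈ side T w₂ v → x ∈ side T v w₁ := by
  have base : w₂ ∈ side T v w₁ := by
    have hadj : (T.deleteEdges {s(v, w₁)}).Adj w₂ v := by
      refine SimpleGraph.deleteEdges_adj.mpr ⟨h2.symm, ?_⟩
      simp only [Set.mem_singleton_iff, Sym2.eq_iff]
      rintro (⟨h5, h6⟩ | ⟨h5, h6⟩)
      · exact h2.ne' h5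
      · exact hne h5.symm
    exact hadj.reachable
  intro x hx
  obtain ⟨p⟩ := hx.symm
  have main : ∀ (z x' : V) (_ : (T.deleteEdges {s(w₂, v)}).Walk z x'),
      (T.deleteEdges {s(w₂, v)}).Reachable w₂ z → z ∈ side T v w₁ → x' ∈ side T v w₁ := by
    intro z x' q
    induction q with
    | nil => exact fun _ hz => hz
    | cons hadj q ih =>
      rename_i a b c
      intro hra hza
      have hradj := hadj
      rw [SimpleGraph.deleteEdges_adj] at hradj
      have hb : b ∈ side T v w₁ := by
        by_cases he : s(a, b) = s(v, w₁)
        · exfalso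
          rw [Sym2.eq_iff] at he
          rcases he with ⟨h5, h6⟩ | ⟨h5, h6⟩
          · rw [h5] at hra
            exact not_reach_of_tree hT h2.symm hra
          · rw [h5] at hza
            exact side_disjoint hT h1 w₁ ⟨hza, mem_side_self T w₁ v⟩
        · have : (T.deleteEdges {s(v, w₁)}).Adj a b :=
            SimpleGraph.deleteEdges_adj.mpr ⟨hradj.1, by simpa using he⟩
          exact (this.reachable.symm).trans hza
      exact ih (hra.trans hadj.reachable) hb
  exact main w₂ x p (Reachable.refl _) base

/-- Every vertex other than `v` lies in the piece of some tree-neighbor of `v`. -/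
lemma pieces_cover {T : SimpleGraph V} (hT : T.IsTree) (v x : V) :
    x = v ∨ ∃ w, T.Adj v w ∧ x ∈ side T w v := by
  have aux : ∀ (y z : V) (_ : T.Walk y z),
      (z = v ∨ ∃ w, T.Adj v w ∧ z ∈ side T w v) →
      (y = v ∨ ∃ w, T.Adj v w ∧ y ∈ side T w v) := by
    intro y z p
    induction p with
    | nil => exact id
    | cons hadj q ih =>
      rename_i a b c
      intro hc
      rcases ih hc with rfl | ⟨w, hw, hbw⟩
      · right
        exact ⟨a, hadj.symm, mem_side_self T a b⟩
      · by_cases he : s(a, b) = s(w, v)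
        · rw [Sym2.eq_iff] at he
          rcases he with ⟨h5, h6⟩ | ⟨h5, h6⟩
          · right
            exact ⟨w, hw, by rw [h5]; exact mem_side_self T w v⟩
          · exact Or.inl h5
        · right
          refine ⟨w, hw, ?_⟩
          have : (T.deleteEdges {s(w, v)}).Adj a b :=
            SimpleGraph.deleteEdges_adj.mpr ⟨hadj, by simpa using he⟩
          exact (this.reachable).trans hbw
  obtain ⟨p⟩ := hT.1.preconnected x v
  exact aux x v p (Or.inl rfl)

/-- All vertices on a walk from `w` in the deleted graph stay in `side T w v`. -/
lemma walk_support_in_side {T : SimpleGraph V} {v w : V}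
    {x : V} (p : (T.deleteEdges {s(w, v)}).Walk w x) :
    ∀ z ∈ p.support, z ∈ side T w v := by
  classical
  intro z hz
  exact (Reachable.symm ⟨p.takeUntil z hz⟩ : _)

/-- Crossing lemma: a walk from outside `A` to inside `A` contains a crossing edge. -/
lemma walk_crossing {G' : SimpleGraph V} {a c : V} (A : Set V) :
    ∀ (p : G'.Walk a c), a ∉ A → c ∈ A →
    ∃ y z, G'.Adj y z ∧ y ∈ p.support ∧ z ∈ p.support ∧ y ∉ A ∧ z ∈ A := by
  intro p
  induction p with
  | nil => exact fun ha hc => absurd hc ha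
  | cons hadj q ih =>
    rename_i x y z
    intro ha hc
    by_cases hy : y ∈ A
    · exact ⟨x, y, hadj, by simp, by simp [SimpleGraph.Walk.support_cons], ha, hy⟩
    · obtain ⟨y', z', h1, h2, h3, h4, h5⟩ := ih hy hc
      exact ⟨y', z', h1, by simp [SimpleGraph.Walk.support_cons, h2],
        by simp [SimpleGraph.Walk.support_cons, h3], h4, h5⟩




abbrev NV (b : ℕ) := Fin (4 * b)

def comm {b : ℕ} (x : NV b) : ℕ := (x : ℕ) / b
def idx {b : ℕ} (x : NV b) : ℕ := (x : ℕ) % b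
def myG (b D s : ℕ) : SimpleGraph (NV b) where
  Adj u v := u ≠ v ∧ ((comm u = comm v ∧ (idx u < D + s ∨ idx v < D + s)) ∨
    ((comm u + 1) % 4 = comm v ∧ (D ≤ idx u ∧ idx u < D + s)) ∨
    ((comm v + 1) % 4 = comm u ∧ (D ≤ idx v ∧ idx v < D + s)))
  symm := by
    constructor
    rintro u v ⟨hne, h⟩
    refine ⟨hne.symm, ?_⟩
    rcases h with ⟨h1, h2⟩ | ⟨h1, h2⟩ | ⟨h1, h2⟩
    · exact Or.inl ⟨h1.symm, h2.symm⟩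
    · exact Or.inr (Or.inr ⟨h1, h2⟩)
    · exact Or.inr (Or.inl ⟨h1, h2⟩)
  loopless := ⟨fun u h => h.1 rfl⟩

lemma myG_adj {b D s : ℕ} {u v : NV b} :
    (myG b D s).Adj u v ↔ u ≠ v ∧
      ((comm u = comm v ∧ (idx u < D + s ∨ idx v < D + s)) ∨
      ((comm u + 1) % 4 = comm v ∧ (D ≤ idx u ∧ idx u < D + s)) ∨
      ((comm v + 1) % 4 = comm u ∧ (D ≤ idx v ∧ idx v < D + s))) :=
  Iff.rfl

section Counting

variable {b : ℕ}

lemma comm_lt (hb : 0 < b) (x : NV b) : comm x < 4 :=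
  Nat.div_lt_of_lt_mul (by have := x.2; omega)

def mkV (hb : 0 < b) (j i : ℕ) : NV b :=
  ⟨(i % b) + b * (j % 4), by
    have h1 : i % b < b := Nat.mod_lt _ hb
    have h2 : j % 4 < 4 := Nat.mod_lt _ (by norm_num)
    calc i % b + b * (j % 4) < b + b * 3 := by
          have : b * (j % 4) ≤ b * 3 := Nat.mul_le_mul_left _ (by omega)
          omega
      _ ≤ 4 * b := by ring_nf; omega⟩

lemma comm_mkV (hb : 0 < b) (j i : ℕ) (hj : j < 4) (hi : i < b) :
    comm (mkV hb j i) = j := by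
  simp only [comm, mkV]
  rw [Nat.add_mul_div_left _ _ hb, Nat.div_eq_of_lt (Nat.mod_lt _ hb)]
  omega

lemma idx_mkV (hb : 0 < b) (j i : ℕ) (hi : i < b) :
    idx (mkV hb j i) = i := by
  simp only [idx, mkV]
  rw [Nat.add_mul_mod_self_left, Nat.mod_mod_of_dvd _ (dvd_refl b)]
  exact Nat.mod_eq_of_lt hi

lemma idx_lt (hb : 0 < b) (x : NV b) : idx x < b := Nat.mod_lt _ hb

lemma eq_of_comm_idx {x y : NV b} (h1 : comm x = comm y) (h2 : idx x = idx y) : x = y := by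
  have e1 : b * comm x + idx x = (x : ℕ) := Nat.div_add_mod _ _
  have e2 : b * comm y + idx y = (y : ℕ) := Nat.div_add_mod _ _
  rw [h1, h2] at e1
  exact Fin.ext (e1.symm.trans e2)

/-- Counting vertices in a community with an index predicate. -/
lemma card_comm_filter (hb : 0 < b) (j : ℕ) (hj : j < 4) (P : ℕ → Prop)
    [DecidablePred P] :
    (Finset.univ.filter (fun x : NV b => comm x = j ∧ P (idx x))).card
      = ((Finset.range b).filter P).card := by
  have himg : Finset.univ.filter (fun x : NV b => comm x = j ∧ P (idx x))
      = ((Finset.range b).filter P).image (fun i => mkV hb j i) := by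
    ext x
    simp only [Finset.mem_filter, Finset.mem_univ, true_and, Finset.mem_image,
      Finset.mem_range]
    constructor
    · rintro ⟨hcx, hpx⟩
      refine ⟨idx x, ⟨idx_lt hb x, hpx⟩, ?_⟩
      exact eq_of_comm_idx (by rw [comm_mkV hb j _ hj (idx_lt hb x), hcx])
        (by rw [idx_mkV hb j _ (idx_lt hb x)])
    · rintro ⟨i, ⟨hib, hpi⟩, rfl⟩
      exact ⟨comm_mkV hb j i hj hib, by rw [idx_mkV hb j i hib]; exact hpi⟩
  rw [himg, Finset.card_image_of_injOn]
  intro i hi i' hi' he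
  simp only [Finset.coe_filter, Finset.mem_range, Set.mem_setOf_eq] at hi hi'
  have := congrArg idx he
  rwa [idx_mkV hb j _ hi.1, idx_mkV hb j _ hi'.1] at this

lemma card_range_filter_lt (h c : ℕ) (hc : h ≤ c) :
    ((Finset.range c).filter (fun i => i < h)).card = h := by
  have : (Finset.range c).filter (fun i => i < h) = Finset.range h := by
    ext i
    simp only [Finset.mem_filter, Finset.mem_range]
    omega
  rw [this, Finset.card_range]

lemma card_range_filter_Ico (lo hi c : ℕ) (hc : hi ≤ c) :
    ((Finset.range c).filter (fun i => lo ≤ i ∧ i < hi)).card = hi - lo := by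
  have : (Finset.range c).filter (fun i => lo ≤ i ∧ i < hi) = Finset.Ico lo hi := by
    ext i
    simp only [Finset.mem_filter, Finset.mem_range, Finset.mem_Ico]
    omega
  rw [this, Nat.card_Ico]

end Counting

section Families

variable {V : Type*} [Fintype V] [DecidableEq V]

def pairsF (A B : Finset V) : Finset (Sym2 V) :=
  (A ×ˢ B).image (fun p => s(p.1, p.2))

lemma mem_pairsF {A B : Finset V} {e : Sym2 V} :
    e ∈ pairsF A B ↔ ∃ a ∈ A, ∃ c ∈ B, e = s(a, c) := by
  simp only [pairsF, Finset.mem_image, Finset.mem_product, Prod.exists]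
  constructor
  · rintro ⟨a, c, ⟨ha, hc⟩, rfl⟩
    exact ⟨a, ha, c, hc, rfl⟩
  · rintro ⟨a, ha, c, hc, rfl⟩
    exact ⟨a, c, ⟨ha, hc⟩, rfl⟩

lemma card_pairsF {A B : Finset V} (hd : ∀ a ∈ A, a ∉ B) :
    (pairsF A B).card = A.card * B.card := by
  rw [pairsF, Finset.card_image_of_injOn, Finset.card_product]
  rintro ⟨a, c⟩ h1 ⟨a', c'⟩ h2 he
  simp only [Finset.mem_coe, Finset.mem_product] at h1 h2
  simp only [Sym2.eq_iff] at he
  rcases he with ⟨rfl, rfl⟩ | ⟨rfl, rfl⟩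
  · rfl
  · exact absurd h2.2 (hd _ h1.1)

end Families




lemma core0 (h R a₁ a₂ y₂ c₁ : ℕ) (e1 : a₁ + a₂ = h) (e2 : y₂ + c₁ = R)
    (hhR : h ≤ R) (h2y : 2*(a₁+y₂) ≤ h+R) :
    h*(a₁+y₂) ≤ 2*(a₁*c₁+y₂*a₂) := by
  zify at *
  have ha₁ : (0:ℤ) ≤ (a₁:ℤ) := Int.natCast_nonneg _
  have hy₂ : (0:ℤ) ≤ (y₂:ℤ) := Int.natCast_nonneg _
  have hh : (0:ℤ) ≤ (h:ℤ) := Int.natCast_nonneg _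
  rcases le_or_gt 0 ((h:ℤ) + 2*((a₁:ℤ)+(y₂:ℤ)) - R) with ht | ht
  · nlinarith [sq_nonneg ((4:ℤ)*a₁ - (h + 2*((a₁:ℤ)+y₂) - R)),
      mul_nonneg (sub_nonneg.2 hhR) (by linarith : (0:ℤ) ≤ h + R - 2*((a₁:ℤ)+y₂)),
      mul_nonneg ht (by linarith : (0:ℤ) ≤ (R:ℤ) - ((a₁:ℤ)+y₂))]
  · nlinarith [mul_nonneg ha₁ (by linarith : (0:ℤ) ≤ (R:ℤ) - h - 2*((a₁:ℤ)+y₂)),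
      mul_nonneg (add_nonneg ha₁ hy₂) hh, sq_nonneg ((a₁:ℤ))]

lemma core_split (h R a₁ a₂ y₂ c₁ β : ℕ) (e1 : a₁ + a₂ = h) (e2 : y₂ + c₁ = R)
    (hhR : h ≤ R) (hβ1 : β ≤ a₁ + y₂) (hβ2 : a₁ + y₂ + β ≤ h + R) :
    h * β ≤ 2*(a₁*c₁ + y₂*a₂) := by
  rcases le_or_gt (2*(a₁+y₂)) (h+R) with hc | hc
  · calc h*β ≤ h*(a₁+y₂) := Nat.mul_le_mul_left _ hβ1
      _ ≤ 2*(a₁*c₁+y₂*a₂) := core0 h R a₁ a₂ y₂ c₁ e1 e2 hhR hc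
  · have h2y' : 2*(a₂+c₁) ≤ h+R := by omega
    have hcore := core0 h R a₂ a₁ c₁ y₂ (by omega) (by omega) hhR h2y'
    have hβ' : β ≤ a₂ + c₁ := by omega
    calc h*β ≤ h*(a₂+c₁) := Nat.mul_le_mul_left _ hβ'
      _ ≤ 2*(a₂*y₂+c₁*a₁) := hcore
      _ = 2*(a₁*c₁+y₂*a₂) := by ring



/-- number of S-vertices in community j -/
def Yj {b : ℕ} (Sf : Finset (NV b)) (j : ℕ) : ℕ :=
  (Finset.univ.filter (fun x : NV b => x ∈ Sf ∧ comm x = j)).card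

section Cuts

variable {b D s : ℕ}

lemma card_split (Q : NV b → Prop) [DecidablePred Q] (Sf : Finset (NV b)) :
    (Finset.univ.filter (fun x => x ∈ Sf ∧ Q x)).card
      + (Finset.univ.filter (fun x => x ∉ Sf ∧ Q x)).card
      = (Finset.univ.filter Q).card := by
  have h1 : Finset.univ.filter (fun x : NV b => x ∈ Sf ∧ Q x)
      = (Finset.univ.filter Q).filter (fun x => x ∈ Sf) := by
    ext x
    simp only [Finset.mem_filter, Finset.mem_univ, true_and]
    tauto
  have h2 : Finset.univ.filter (fun x : NV b => x ∉ Sf ∧ Q x)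
      = (Finset.univ.filter Q).filter (fun x => x ∉ Sf) := by
    ext x
    simp only [Finset.mem_filter, Finset.mem_univ, true_and]
    tauto
  rw [h1, h2, Finset.card_filter_add_card_filter_not]

lemma card_hub (hb : 0 < b) (hhs : D + s ≤ b) (j : ℕ) (hj : j < 4) :
    (Finset.univ.filter (fun x : NV b => comm x = j ∧ idx x < D + s)).card = D + s := by
  rw [card_comm_filter hb j hj (fun i => i < D + s)]
  have heq : (Finset.range b).filter (fun i => i < D + s) = Finset.range (D+s) := by
    ext i
    simp only [Finset.mem_filter, Finset.mem_range]
    omega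
  rw [heq, Finset.card_range]

lemma card_nonhub (hb : 0 < b) (hhs : D + s ≤ b) (j : ℕ) (hj : j < 4) :
    (Finset.univ.filter (fun x : NV b => comm x = j ∧ ¬ idx x < D + s)).card = b - (D + s) := by
  rw [card_comm_filter hb j hj (fun i => ¬ i < D + s)]
  have heq : (Finset.range b).filter (fun i => ¬ i < D + s) = Finset.Ico (D+s) b := by
    ext i
    simp only [Finset.mem_filter, Finset.mem_range, Finset.mem_Ico]
    omega
  rw [heq, Nat.card_Ico]

lemma card_gw (hb : 0 < b) (hhs : D + s ≤ b) (j : ℕ) (hj : j < 4) :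
    (Finset.univ.filter (fun x : NV b => comm x = j ∧ (D ≤ idx x ∧ idx x < D + s))).card
      = s := by
  rw [card_comm_filter hb j hj (fun i => D ≤ i ∧ i < D + s)]
  have heq : (Finset.range b).filter (fun i => D ≤ i ∧ i < D + s) = Finset.Ico D (D+s) := by
    ext i
    simp only [Finset.mem_filter, Finset.mem_range, Finset.mem_Ico]
    omega
  rw [heq, Nat.card_Ico]
  omega

lemma card_commF (hb : 0 < b) (j : ℕ) (hj : j < 4) :
    (Finset.univ.filter (fun x : NV b => comm x = j)).card = b := by
  have : (Finset.univ.filter (fun x : NV b => comm x = j))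
      = (Finset.univ.filter (fun x : NV b => comm x = j ∧ (fun _ => True) (idx x))) := by
    ext x
    simp
  rw [this, card_comm_filter hb j hj (fun _ => True)]
  simp

/-- The split (community expansion) bound. -/
lemma split_bound (hb : 0 < b) (hhs : D + s ≤ b) (h2hb : 2*(D+s) ≤ b)
    (Sf : Finset (NV b)) (S : Set (NV b)) (hSf : ∀ x, x ∈ Sf ↔ x ∈ S)
    (j : ℕ) (hj : j < 4) (β : ℕ)
    (hβ1 : β ≤ Yj Sf j) (hβ2 : Yj Sf j + β ≤ b) :
    (D+s) * β ≤ 2 * cutCount (myG b D s) S := by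
  set A₁ := Finset.univ.filter (fun x : NV b => x ∈ Sf ∧ (comm x = j ∧ idx x < D + s)) with hA₁
  set A₂ := Finset.univ.filter (fun x : NV b => x ∉ Sf ∧ (comm x = j ∧ idx x < D + s)) with hA₂
  set B₂ := Finset.univ.filter (fun x : NV b => x ∈ Sf ∧ (comm x = j ∧ ¬ idx x < D + s)) with hB₂
  set B₁ := Finset.univ.filter (fun x : NV b => x ∉ Sf ∧ (comm x = j ∧ ¬ idx x < D + s)) with hB₁
  have hA : A₁.card + A₂.card = D + s := by
    rw [hA₁, hA₂, card_split _ Sf, card_hub hb hhs j hj]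
  have hB : B₂.card + B₁.card = b - (D + s) := by
    rw [hB₂, hB₁, card_split _ Sf, card_nonhub hb hhs j hj]
  have hY : Yj Sf j = A₁.card + B₂.card := by
    rw [Yj, hA₁, hB₂]
    have e1 : Finset.univ.filter (fun x : NV b => x ∈ Sf ∧ comm x = j)
        = (Finset.univ.filter (fun x : NV b => x ∈ Sf ∧ (comm x = j ∧ idx x < D + s)))
          ∪ (Finset.univ.filter (fun x : NV b => x ∈ Sf ∧ (comm x = j ∧ ¬ idx x < D + s))) := by
      ext x
      simp only [Finset.mem_union, Finset.mem_filter, Finset.mem_univ, true_and]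
      tauto
    rw [e1, Finset.card_union_of_disjoint]
    rw [Finset.disjoint_left]
    intro x hx1 hx2
    rw [Finset.mem_filter] at hx1 hx2
    exact hx2.2.2.2 hx1.2.2.2
  have hd₁ : ∀ a ∈ A₁, a ∉ B₁ := by
    intro a ha hb'
    rw [hA₁, Finset.mem_filter] at ha
    rw [hB₁, Finset.mem_filter] at hb'
    exact hb'.2.1 ha.2.1
  have hd₂ : ∀ a ∈ B₂, a ∉ A₂ := by
    intro a ha hb'
    rw [hB₂, Finset.mem_filter] at ha
    rw [hA₂, Finset.mem_filter] at hb'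
    exact hb'.2.1 ha.2.1
  have hne : ∀ (x y : NV b), idx x < D + s → ¬ idx y < D + s → x ≠ y := by
    intro x y hx hy h
    rw [h] at hx
    exact hy hx
  have hcut : (pairsF A₁ B₁).card + (pairsF B₂ A₂).card
      ≤ cutCount (myG b D s) S := by
    have hdisj : Disjoint (pairsF A₁ B₁) (pairsF B₂ A₂) := by
      rw [Finset.disjoint_left]
      intro e he1 he2
      rw [mem_pairsF] at he1 he2
      obtain ⟨a, ha, c, hc, rfl⟩ := he1
      obtain ⟨a', ha', c', hc', he⟩ := he2
      rw [hA₁, Finset.mem_filter] at ha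
      rw [hB₁, Finset.mem_filter] at hc
      rw [hB₂, Finset.mem_filter] at ha'
      rw [hA₂, Finset.mem_filter] at hc'
      rw [Sym2.eq_iff] at he
      rcases he with ⟨h5, h6⟩ | ⟨h5, h6⟩
      · rw [← h5] at ha'
        exact ha'.2.2.2 ha.2.2.2
      · rw [← h6] at ha'
        exact hc.2.1 ha'.2.1
    rw [← Finset.card_union_of_disjoint hdisj]
    apply le_cutCount
    intro e he
    rw [Finset.mem_union] at he
    rcases he with he | he <;> rw [mem_pairsF] at he
    · obtain ⟨a, ha, c, hc, rfl⟩ := he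
      rw [hA₁, Finset.mem_filter] at ha
      rw [hB₁, Finset.mem_filter] at hc
      refine ⟨?_, a, c, rfl, (hSf a).mp ha.2.1, fun hcS => hc.2.1 ((hSf c).mpr hcS)⟩
      rw [SimpleGraph.mem_edgeSet, myG_adj]
      exact ⟨hne a c ha.2.2.2 hc.2.2.2,
        Or.inl ⟨by rw [ha.2.2.1, hc.2.2.1], Or.inl ha.2.2.2⟩⟩
    · obtain ⟨a, ha, c, hc, rfl⟩ := he
      rw [hB₂, Finset.mem_filter] at ha
      rw [hA₂, Finset.mem_filter] at hc
      refine ⟨?_, a, c, rfl, (hSf a).mp ha.2.1, fun hcS => hc.2.1 ((hSf c).mpr hcS)⟩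
      rw [SimpleGraph.mem_edgeSet, myG_adj]
      exact ⟨(hne c a hc.2.2.2 ha.2.2.2).symm,
        Or.inl ⟨by rw [ha.2.2.1, hc.2.2.1], Or.inr hc.2.2.2⟩⟩
  have hcards : (pairsF A₁ B₁).card = A₁.card * B₁.card := card_pairsF hd₁
  have hcards2 : (pairsF B₂ A₂).card = B₂.card * A₂.card := card_pairsF hd₂
  have halg := core_split (D+s) (b - (D+s)) A₁.card A₂.card B₂.card B₁.card β
    hA (by omega) (by omega) (by omega) (by omega)
  calc (D+s) * β ≤ 2*(A₁.card * B₁.card + B₂.card * A₂.card) := halg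
    _ = 2*((pairsF A₁ B₁).card + (pairsF B₂ A₂).card) := by rw [hcards, hcards2]
    _ ≤ 2 * cutCount (myG b D s) S := by omega

end Cuts


section Bundle

variable {b D s : ℕ}

/-- The gateway (interface) bound.  `jΓ` carries the gateways to community `(jΓ+1)%4`.
If one of the two communities is `S`-big and the other `S`-small, many edges cross. -/
lemma bundle_bound (hb : 0 < b) (hhs : D + s ≤ b)
    (Sf : Finset (NV b)) (S : Set (NV b)) (hSf : ∀ x, x ∈ Sf ↔ x ∈ S)
    (jΓ : ℕ) (hj : jΓ < 4) (β : ℕ) (hβb : β ≤ b)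
    (hcase :
      (b < Yj Sf jΓ + β ∧ Yj Sf ((jΓ+1)%4) < β) ∨
      (Yj Sf jΓ < β ∧ b < Yj Sf ((jΓ+1)%4) + β)) :
    s * b ≤ cutCount (myG b D s) S + s * β := by
  have hj4 : (jΓ+1)%4 < 4 := Nat.mod_lt _ (by norm_num)
  have hjne : jΓ ≠ (jΓ+1)%4 := by omega
  set Gin := Finset.univ.filter
    (fun x : NV b => x ∈ Sf ∧ (comm x = jΓ ∧ (D ≤ idx x ∧ idx x < D + s))) with hGin
  set Gout := Finset.univ.filter
    (fun x : NV b => x ∉ Sf ∧ (comm x = jΓ ∧ (D ≤ idx x ∧ idx x < D + s))) with hGout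
  have hks : Gin.card + Gout.card = s := by
    rw [hGin, hGout, card_split _ Sf, card_gw hb hhs jΓ hj]
  -- mem-based disequality
  have hne_mem : ∀ (x y : NV b), x ∈ Sf → y ∉ Sf → x ≠ y := by
    intro x y hx hy h
    rw [h] at hx
    exact hy hx
  rcases hcase with ⟨hbig, hsmall⟩ | ⟨hsmall, hbig⟩
  · -- jΓ big, (jΓ+1) small
    set Tnext := Finset.univ.filter (fun x : NV b => x ∉ Sf ∧ comm x = (jΓ+1)%4) with hT
    have hTcard : Yj Sf ((jΓ+1)%4) + Tnext.card = b := by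
      rw [Yj, hT, card_split (fun x : NV b => comm x = (jΓ+1)%4) Sf, card_commF hb _ hj4]
    set AS := Finset.univ.filter (fun x : NV b => x ∈ Sf ∧ comm x = jΓ) with hAS
    have hAScard : AS.card = Yj Sf jΓ := rfl
    have hF1 : (pairsF Gin Tnext).card = Gin.card * Tnext.card := by
      apply card_pairsF
      intro a ha hb'
      rw [hGin, Finset.mem_filter] at ha
      rw [hT, Finset.mem_filter] at hb'
      exact hb'.2.1 ha.2.1
    have hF2 : (pairsF AS Gout).card = AS.card * Gout.card := by
      apply card_pairsF
      intro a ha hb'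
      rw [hAS, Finset.mem_filter] at ha
      rw [hGout, Finset.mem_filter] at hb'
      exact hb'.2.1 ha.2.1
    have hdisj : Disjoint (pairsF Gin Tnext) (pairsF AS Gout) := by
      rw [Finset.disjoint_left]
      intro e he1 he2
      rw [mem_pairsF] at he1 he2
      obtain ⟨g, hg, x, hx, rfl⟩ := he1
      obtain ⟨a, ha, c, hc, he⟩ := he2
      rw [hGin, Finset.mem_filter] at hg
      rw [hT, Finset.mem_filter] at hx
      rw [hAS, Finset.mem_filter] at ha
      rw [hGout, Finset.mem_filter] at hc
      rw [Sym2.eq_iff] at he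
      rcases he with ⟨h5, h6⟩ | ⟨h5, h6⟩
      · rw [h6] at hx
        exact hjne (hc.2.2.1.symm.trans hx.2.2)
      · rw [h6] at hx
        exact hjne (ha.2.2.symm.trans hx.2.2)
    have hcut : Gin.card * Tnext.card + AS.card * Gout.card ≤ cutCount (myG b D s) S := by
      rw [← hF1, ← hF2, ← Finset.card_union_of_disjoint hdisj]
      apply le_cutCount
      intro e he
      rw [Finset.mem_union] at he
      rcases he with he | he <;> rw [mem_pairsF] at he
      · obtain ⟨g, hg, x, hx, rfl⟩ := he
        rw [hGin, Finset.mem_filter] at hg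
        rw [hT, Finset.mem_filter] at hx
        refine ⟨?_, g, x, rfl, (hSf g).mp hg.2.1, fun hxS => hx.2.1 ((hSf x).mpr hxS)⟩
        rw [SimpleGraph.mem_edgeSet, myG_adj]
        refine ⟨hne_mem g x hg.2.1 hx.2.1, Or.inr (Or.inl ?_)⟩
        rw [hg.2.2.1, hx.2.2]
        exact ⟨rfl, hg.2.2.2⟩
      · obtain ⟨a, ha, c, hc, rfl⟩ := he
        rw [hAS, Finset.mem_filter] at ha
        rw [hGout, Finset.mem_filter] at hc
        refine ⟨?_, a, c, rfl, (hSf a).mp ha.2.1, fun hcS => hc.2.1 ((hSf c).mpr hcS)⟩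
        rw [SimpleGraph.mem_edgeSet, myG_adj]
        refine ⟨hne_mem a c ha.2.1 hc.2.1, Or.inl ⟨by rw [ha.2.2, hc.2.2.1], Or.inr hc.2.2.2.2⟩⟩
    -- arithmetic:  Tnext.card ≥ b - β + 1, AS.card ≥ b - β + 1
    have h1 : b ≤ Tnext.card + β := by omega
    have h2 : b ≤ AS.card + β := by omega
    -- s*(b-β) ≤ kin*(b-β) + (s-kin)*(b-β) ≤ cut
    have key : s * b ≤ Gin.card * Tnext.card + AS.card * Gout.card + s * β := by
      have e1 : Gin.card * b ≤ Gin.card * Tnext.card + Gin.card * β := by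
        calc Gin.card * b ≤ Gin.card * (Tnext.card + β) := Nat.mul_le_mul_left _ h1
          _ = Gin.card * Tnext.card + Gin.card * β := by ring
      have e2 : Gout.card * b ≤ AS.card * Gout.card + Gout.card * β := by
        calc Gout.card * b ≤ Gout.card * (AS.card + β) := Nat.mul_le_mul_left _ h2
          _ = AS.card * Gout.card + Gout.card * β := by ring
      calc s * b = Gin.card * b + Gout.card * b := by rw [← Nat.add_mul, hks]
        _ ≤ (Gin.card * Tnext.card + AS.card * Gout.card)
            + (Gin.card * β + Gout.card * β) := by omega
        _ = (Gin.card * Tnext.card + AS.card * Gout.card) + s * β := by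
            rw [← Nat.add_mul, hks, Nat.mul_comm]
    omega
  · -- jΓ small, (jΓ+1) big
    set Tprev := Finset.univ.filter (fun x : NV b => x ∉ Sf ∧ comm x = jΓ) with hT
    have hTcard : Yj Sf jΓ + Tprev.card = b := by
      rw [Yj, hT, card_split (fun x : NV b => comm x = jΓ) Sf, card_commF hb _ hj]
    set BS := Finset.univ.filter (fun x : NV b => x ∈ Sf ∧ comm x = (jΓ+1)%4) with hBS
    have hBScard : BS.card = Yj Sf ((jΓ+1)%4) := rfl
    have hF1 : (pairsF Gin Tprev).card = Gin.card * Tprev.card := by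
      apply card_pairsF
      intro a ha hb'
      rw [hGin, Finset.mem_filter] at ha
      rw [hT, Finset.mem_filter] at hb'
      exact hb'.2.1 ha.2.1
    have hF2 : (pairsF BS Gout).card = BS.card * Gout.card := by
      apply card_pairsF
      intro a ha hb'
      rw [hBS, Finset.mem_filter] at ha
      rw [hGout, Finset.mem_filter] at hb'
      exact hb'.2.1 ha.2.1
    have hdisj : Disjoint (pairsF Gin Tprev) (pairsF BS Gout) := by
      rw [Finset.disjoint_left]
      intro e he1 he2
      rw [mem_pairsF] at he1 he2
      obtain ⟨g, hg, x, hx, rfl⟩ := he1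
      obtain ⟨a, ha, c, hc, he⟩ := he2
      rw [hGin, Finset.mem_filter] at hg
      rw [hT, Finset.mem_filter] at hx
      rw [hBS, Finset.mem_filter] at ha
      rw [hGout, Finset.mem_filter] at hc
      rw [Sym2.eq_iff] at he
      rcases he with ⟨h5, h6⟩ | ⟨h5, h6⟩
      · rw [h5] at hg
        exact hjne (hg.2.2.1.symm.trans ha.2.2)
      · rw [h6] at hx
        exact hjne (hx.2.2.symm.trans ha.2.2)
    have hcut : Gin.card * Tprev.card + BS.card * Gout.card ≤ cutCount (myG b D s) S := by
      rw [← hF1, ← hF2, ← Finset.card_union_of_disjoint hdisj]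
      apply le_cutCount
      intro e he
      rw [Finset.mem_union] at he
      rcases he with he | he <;> rw [mem_pairsF] at he
      · obtain ⟨g, hg, x, hx, rfl⟩ := he
        rw [hGin, Finset.mem_filter] at hg
        rw [hT, Finset.mem_filter] at hx
        refine ⟨?_, g, x, rfl, (hSf g).mp hg.2.1, fun hxS => hx.2.1 ((hSf x).mpr hxS)⟩
        rw [SimpleGraph.mem_edgeSet, myG_adj]
        refine ⟨hne_mem g x hg.2.1 hx.2.1,
          Or.inl ⟨by rw [hg.2.2.1, hx.2.2], Or.inl hg.2.2.2.2⟩⟩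
      · obtain ⟨a, ha, c, hc, rfl⟩ := he
        rw [hBS, Finset.mem_filter] at ha
        rw [hGout, Finset.mem_filter] at hc
        refine ⟨?_, a, c, rfl, (hSf a).mp ha.2.1, fun hcS => hc.2.1 ((hSf c).mpr hcS)⟩
        rw [SimpleGraph.mem_edgeSet, myG_adj]
        refine ⟨hne_mem a c ha.2.1 hc.2.1, Or.inr (Or.inr ?_)⟩
        rw [hc.2.2.1, ha.2.2]
        exact ⟨rfl, hc.2.2.2⟩
    have h1 : b ≤ Tprev.card + β := by omega
    have h2 : b ≤ BS.card + β := by omega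
    have key : s * b ≤ Gin.card * Tprev.card + BS.card * Gout.card + s * β := by
      have e1 : Gin.card * b ≤ Gin.card * Tprev.card + Gin.card * β := by
        calc Gin.card * b ≤ Gin.card * (Tprev.card + β) := Nat.mul_le_mul_left _ h1
          _ = Gin.card * Tprev.card + Gin.card * β := by ring
      have e2 : Gout.card * b ≤ BS.card * Gout.card + Gout.card * β := by
        calc Gout.card * b ≤ Gout.card * (BS.card + β) := Nat.mul_le_mul_left _ h2
          _ = BS.card * Gout.card + Gout.card * β := by ring
      calc s * b = Gin.card * b + Gout.card * b := by rw [← Nat.add_mul, hks]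
        _ ≤ (Gin.card * Tprev.card + BS.card * Gout.card)
            + (Gin.card * β + Gout.card * β) := by omega
        _ = (Gin.card * Tprev.card + BS.card * Gout.card) + s * β := by
            rw [← Nat.add_mul, hks, Nat.mul_comm]
    omega

end Bundle


section ConnEdges

variable {b D s : ℕ}

lemma ne_of_idx {x y : NV b} (h : idx x ≠ idx y) : x ≠ y := fun he => h (by rw [he])

lemma ne_of_comm {x y : NV b} (h : comm x ≠ comm y) : x ≠ y := fun he => h (by rw [he])

lemma adj_within (hb : 0 < b) {x y : NV b} (hc : comm x = comm y)
    (hl : idx x < D + s ∨ idx y < D + s) (hne : x ≠ y) : (myG b D s).Adj x y :=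
  myG_adj.mpr ⟨hne, Or.inl ⟨hc, hl⟩⟩

lemma myG_connected (hb : 0 < b) (hD : 0 < D) (hs : 0 < s) (hhs : D + s ≤ b) :
    (myG b D s).Connected := by
  have hDb : D < b := by omega
  have h0b : 0 < b := hb
  set hub : ℕ → NV b := fun j => mkV hb j 0 with hhub
  set gate : ℕ → NV b := fun j => mkV hb j D with hgate
  have hcommhub : ∀ j, j < 4 → comm (hub j) = j := fun j hj => comm_mkV hb j 0 hj hb
  have hidxhub : ∀ j, idx (hub j) = 0 := fun j => idx_mkV hb j 0 hb
  have hcommgate : ∀ j, j < 4 → comm (gate j) = j := fun j hj => comm_mkV hb j D hj hDb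
  have hidxgate : ∀ j, idx (gate j) = D := fun j => idx_mkV hb j D hDb
  -- hub j ~ gate j
  have hadj1 : ∀ j, j < 4 → (myG b D s).Adj (hub j) (gate j) := by
    intro j hj
    refine adj_within hb (by rw [hcommhub j hj, hcommgate j hj]) ?_ ?_
    · left; rw [hidxhub]; omega
    · apply ne_of_idx; rw [hidxhub, hidxgate]; omega
  -- gate j ~ hub ((j+1)%4)
  have hadj2 : ∀ j, j < 4 → (myG b D s).Adj (gate j) (hub ((j+1)%4)) := by
    intro j hj
    have hj4 : (j+1)%4 < 4 := Nat.mod_lt _ (by norm_num)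
    refine myG_adj.mpr ⟨?_, Or.inr (Or.inl ?_)⟩
    · apply ne_of_comm
      rw [hcommgate j hj, hcommhub _ hj4]
      omega
    · refine ⟨?_, ?_⟩
      · rw [hcommgate j hj, hcommhub _ hj4]
      · rw [hidxgate]; omega
  -- every x reaches hub (comm x)
  have hreach1 : ∀ x : NV b, (myG b D s).Reachable x (hub (comm x)) := by
    intro x
    have hcx : comm x < 4 := comm_lt hb x
    by_cases hx : x = hub (comm x)
    · rw [← hx]
    · refine (adj_within hb ?_ ?_ hx).reachable
      · rw [hcommhub _ hcx]
      · right; rw [hidxhub]; omega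
  -- hubs chain to hub 0
  have hstep : ∀ j, j < 4 → (myG b D s).Reachable (hub ((j+1)%4)) (hub j) := by
    intro j hj
    exact ((hadj2 j hj).reachable.symm).trans ((hadj1 j hj).reachable.symm)
  have hreach0 : ∀ j, j < 4 → (myG b D s).Reachable (hub j) (hub 0) := by
    intro j hj
    interval_cases j
    · exact Reachable.refl _
    · have h1 := hstep 0 (by norm_num)
      norm_num at h1
      exact h1
    · have h1 := hstep 0 (by norm_num)
      have h2 := hstep 1 (by norm_num)
      norm_num at h1 h2
      exact h2.trans h1
    · have h1 := hstep 0 (by norm_num)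
      have h2 := hstep 1 (by norm_num)
      have h3 := hstep 2 (by norm_num)
      norm_num at h1 h2 h3
      exact (h3.trans h2).trans h1
  rw [SimpleGraph.connected_iff]
  constructor
  · intro x y
    exact ((hreach1 x).trans (hreach0 _ (comm_lt hb x))).trans
      (((hreach1 y).trans (hreach0 _ (comm_lt hb y))).symm)
  · exact ⟨⟨0, by omega⟩⟩

lemma le_numEdges (G : SimpleGraph (NV b)) (F : Finset (Sym2 (NV b)))
    (h : ∀ e ∈ F, e ∈ G.edgeSet) : F.card ≤ numEdges G := by
  rw [numEdges, ← Set.ncard_coe_finset F]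
  exact Set.ncard_le_ncard h (Set.toFinite _)

lemma numEdges_le (G : SimpleGraph (NV b)) (F : Finset (Sym2 (NV b)))
    (h : ∀ e ∈ G.edgeSet, e ∈ F) : numEdges G ≤ F.card := by
  rw [numEdges, ← Set.ncard_coe_finset F]
  exact Set.ncard_le_ncard h (Set.toFinite _)

/-- Lower bound for the number of edges. -/
lemma edges_lower (hb : 0 < b) (hD : 0 < D) (hs : 0 < s) (hhs : D + s ≤ b) :
    4 * (D * (b - (D+s))) ≤ numEdges (myG b D s) := by
  classical
  set Core : ℕ → Finset (NV b) :=
    fun j => Finset.univ.filter (fun x : NV b => comm x = j ∧ idx x < D) with hCore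
  set NonHub : ℕ → Finset (NV b) :=
    fun j => Finset.univ.filter (fun x : NV b => comm x = j ∧ ¬ idx x < D + s) with hNonHub
  have hCoreCard : ∀ j, j < 4 → (Core j).card = D := by
    intro j hj
    rw [hCore]
    rw [card_comm_filter hb j hj (fun i => i < D)]
    have heq : (Finset.range b).filter (fun i => i < D) = Finset.range D := by
      ext i
      simp only [Finset.mem_filter, Finset.mem_range]
      omega
    rw [heq, Finset.card_range]
  have hNonHubCard : ∀ j, j < 4 → (NonHub j).card = b - (D + s) := by
    intro j hj
    rw [hNonHub]
    rw [card_comm_filter hb j hj (fun i => ¬ i < D + s)]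
    have heq : (Finset.range b).filter (fun i => ¬ i < D + s) = Finset.Ico (D+s) b := by
      ext i
      simp only [Finset.mem_filter, Finset.mem_range, Finset.mem_Ico]
      omega
    rw [heq, Nat.card_Ico]
  set F := (Finset.range 4).biUnion (fun j => pairsF (Core j) (NonHub j)) with hF
  have hdisj : ∀ j1 ∈ Finset.range 4, ∀ j2 ∈ Finset.range 4, j1 ≠ j2 →
      Disjoint (pairsF (Core j1) (NonHub j1)) (pairsF (Core j2) (NonHub j2)) := by
    intro j1 h1 j2 h2 hne
    rw [Finset.disjoint_left]
    intro e he1 he2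
    rw [mem_pairsF] at he1 he2
    obtain ⟨a, ha, c, hc, rfl⟩ := he1
    obtain ⟨a', ha', c', hc', he⟩ := he2
    rw [hCore, Finset.mem_filter] at ha ha'
    rw [hNonHub, Finset.mem_filter] at hc hc'
    rw [Sym2.eq_iff] at he
    rcases he with ⟨h5, h6⟩ | ⟨h5, h6⟩
    · rw [h5] at ha
      exact hne (ha.2.1.symm.trans ha'.2.1)
    · rw [h5] at ha
      exact hne (ha.2.1.symm.trans hc'.2.1)
  have hFcard : F.card = 4 * (D * (b - (D+s))) := by
    rw [hF, Finset.card_biUnion hdisj]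
    have : ∀ j ∈ Finset.range 4, (pairsF (Core j) (NonHub j)).card = D * (b - (D+s)) := by
      intro j hj
      rw [Finset.mem_range] at hj
      rw [card_pairsF, hCoreCard j hj, hNonHubCard j hj]
      intro a ha hc
      rw [hCore, Finset.mem_filter] at ha
      rw [hNonHub, Finset.mem_filter] at hc
      omega
    rw [Finset.sum_congr rfl this]
    simp [Finset.sum_const]
  rw [← hFcard]
  apply le_numEdges
  intro e he
  rw [hF, Finset.mem_biUnion] at he
  obtain ⟨j, hj, he⟩ := he
  rw [Finset.mem_range] at hj
  rw [mem_pairsF] at he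
  obtain ⟨a, ha, c, hc, rfl⟩ := he
  rw [hCore, Finset.mem_filter] at ha
  rw [hNonHub, Finset.mem_filter] at hc
  rw [SimpleGraph.mem_edgeSet, myG_adj]
  refine ⟨ne_of_idx (by omega), Or.inl ⟨ha.2.1.trans hc.2.1.symm, Or.inl (by omega)⟩⟩

/-- Upper bound for the number of edges. -/
lemma edges_upper (hb : 0 < b) (hhs : D + s ≤ b) :
    numEdges (myG b D s) ≤ 4 * ((D+s) * b) + 4 * (s * b) := by
  classical
  set Hub : ℕ → Finset (NV b) :=
    fun j => Finset.univ.filter (fun x : NV b => comm x = j ∧ idx x < D + s) with hHub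
  set Gw : ℕ → Finset (NV b) :=
    fun j => Finset.univ.filter (fun x : NV b => comm x = j ∧ (D ≤ idx x ∧ idx x < D + s)) with hGw
  set CommF : ℕ → Finset (NV b) :=
    fun j => Finset.univ.filter (fun x : NV b => comm x = j) with hCommF
  set F := ((Finset.range 4).biUnion (fun j => pairsF (Hub j) (CommF j)))
    ∪ ((Finset.range 4).biUnion (fun j => pairsF (Gw j) (CommF ((j+1)%4)))) with hF
  have hsub : ∀ e ∈ (myG b D s).edgeSet, e ∈ F := by
    intro e he
    induction e with
    | h u v =>
      rw [SimpleGraph.mem_edgeSet, myG_adj] at he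
      obtain ⟨hne, hcase⟩ := he
      have hcu : comm u < 4 := comm_lt hb u
      have hcv : comm v < 4 := comm_lt hb v
      rw [hF, Finset.mem_union]
      rcases hcase with ⟨h1, h2 | h2⟩ | ⟨h1, h2⟩ | ⟨h1, h2⟩
      · left
        rw [Finset.mem_biUnion]
        refine ⟨comm u, Finset.mem_range.mpr hcu, ?_⟩
        rw [mem_pairsF]
        exact ⟨u, by simp [hHub, h2], v, by simp [hCommF, h1.symm], rfl⟩
      · left
        rw [Finset.mem_biUnion]
        refine ⟨comm v, Finset.mem_range.mpr hcv, ?_⟩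
        rw [mem_pairsF]
        exact ⟨v, by simp [hHub, h2], u, by simp [hCommF, h1], Sym2.eq_swap⟩
      · right
        rw [Finset.mem_biUnion]
        refine ⟨comm u, Finset.mem_range.mpr hcu, ?_⟩
        rw [mem_pairsF]
        exact ⟨u, by simp [hGw, h2], v, by simp [hCommF, h1.symm], rfl⟩
      · right
        rw [Finset.mem_biUnion]
        refine ⟨comm v, Finset.mem_range.mpr hcv, ?_⟩
        rw [mem_pairsF]
        exact ⟨v, by simp [hGw, h2], u, by simp [hCommF, h1.symm], Sym2.eq_swap⟩
  refine (numEdges_le _ F hsub).trans ?_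
  have hHubCard : ∀ j, j < 4 → (Hub j).card ≤ D + s := by
    intro j hj
    rw [hHub, card_comm_filter hb j hj (fun i => i < D + s)]
    calc ((Finset.range b).filter (fun i => i < D + s)).card
        ≤ (Finset.range (D+s)).card := by
          apply Finset.card_le_card
          intro i hi
          simp only [Finset.mem_filter, Finset.mem_range] at hi ⊢
          omega
      _ = D + s := Finset.card_range _
  have hGwCard : ∀ j, j < 4 → (Gw j).card ≤ s := by
    intro j hj
    rw [hGw, card_comm_filter hb j hj (fun i => D ≤ i ∧ i < D + s)]
    calc ((Finset.range b).filter (fun i => D ≤ i ∧ i < D + s)).card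
        ≤ (Finset.Ico D (D+s)).card := by
          apply Finset.card_le_card
          intro i hi
          simp only [Finset.mem_filter, Finset.mem_range, Finset.mem_Ico] at hi ⊢
          omega
      _ = s := by rw [Nat.card_Ico]; omega
  have hCommCard : ∀ j, (CommF j).card ≤ b := by
    intro j
    by_cases hj : j < 4
    · exact le_of_eq (card_commF hb j hj)
    · have hempty : CommF j = ∅ := by
        ext x
        simp only [hCommF, Finset.mem_filter, Finset.mem_univ, true_and,
          Finset.notMem_empty, iff_false]
        intro h
        exact hj (h ▸ comm_lt hb x)
      rw [hempty, Finset.card_empty]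
      omega
  have hP : ∀ (A B : Finset (NV b)), (pairsF A B).card ≤ A.card * B.card := by
    intro A B
    calc (pairsF A B).card ≤ (A ×ˢ B).card := Finset.card_image_le
      _ = A.card * B.card := Finset.card_product _ _
  calc F.card ≤ ((Finset.range 4).biUnion (fun j => pairsF (Hub j) (CommF j))).card
        + ((Finset.range 4).biUnion (fun j => pairsF (Gw j) (CommF ((j+1)%4)))).card :=
        Finset.card_union_le _ _
    _ ≤ (∑ j ∈ Finset.range 4, (pairsF (Hub j) (CommF j)).card)
        + (∑ j ∈ Finset.range 4, (pairsF (Gw j) (CommF ((j+1)%4))).card) := by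
        gcongr <;> exact Finset.card_biUnion_le
    _ ≤ (∑ j ∈ Finset.range 4, (D+s) * b) + (∑ j ∈ Finset.range 4, s * b) := by
        gcongr with j hj j hj
        · rw [Finset.mem_range] at hj
          exact (hP _ _).trans (Nat.mul_le_mul (hHubCard j hj) (hCommCard j))
        · rw [Finset.mem_range] at hj
          exact (hP _ _).trans (Nat.mul_le_mul (hGwCard j hj) (hCommCard _))
    _ = 4 * ((D+s) * b) + 4 * (s * b) := by
        simp [Finset.sum_const]
        try ring

end ConnEdges


/-- The master lower bound: every spanning tree of `myG` has congestion at least `C`. -/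
theorem main_lb (b D s β C : ℕ)
    (hb : 0 < b) (hD : 0 < D) (hs : 0 < s) (hβ : 0 < β)
    (hhs : D + s ≤ b) (h2hb : 2*(D+s) ≤ b)
    (hCsplit : 2*C ≤ (D+s)*β)
    (hCbundle : C + s*β ≤ s*b)
    (hcover : 2*s*β < b)
    (T : SimpleGraph (NV b)) (hT : IsSpanningTree (myG b D s) T) :
    C ≤ congestion (myG b D s) T := by
  classical
  set G := myG b D s with hG
  obtain ⟨hTle, hTt⟩ := hT
  have hβb : 2 * β ≤ b := by nlinarith
  by_contra hcon
  push_neg at hcon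
  -- every side has small cut
  have hside : ∀ u v : NV b, T.Adj u v → cutCount G (side T u v) < C := by
    intro u v huv
    refine lt_of_le_of_lt ?_ hcon
    exact le_congestion huv le_rfl
  -- finset version of sides
  set sf : NV b → NV b → Finset (NV b) :=
    fun u v => Finset.univ.filter (fun x => x ∈ side T u v) with hsf
  have hsf_mem : ∀ u v x, x ∈ sf u v ↔ x ∈ side T u v := by
    intro u v x
    simp [hsf]
  -- per-community trichotomy
  have tri : ∀ u v : NV b, T.Adj u v → ∀ j, j < 4 →
      Yj (sf u v) j < β ∨ b < Yj (sf u v) j + β := by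
    intro u v huv j hj
    by_contra hcontra
    push_neg at hcontra
    obtain ⟨h1, h2⟩ := hcontra
    have hsb := split_bound hb hhs h2hb (sf u v) (side T u v) (hsf_mem u v) j hj β h1 (by omega)
    rw [← hG] at hsb
    have hcut := hside u v huv
    omega
  -- no big-small adjacency around the cycle
  have noBS : ∀ u v : NV b, T.Adj u v → ∀ jΓ, jΓ < 4 →
      ¬((b < Yj (sf u v) jΓ + β ∧ Yj (sf u v) ((jΓ+1)%4) < β) ∨
        (Yj (sf u v) jΓ < β ∧ b < Yj (sf u v) ((jΓ+1)%4) + β)) := by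
    intro u v huv jΓ hj hcase
    have hbb := bundle_bound hb hhs (sf u v) (side T u v) (hsf_mem u v) jΓ hj β (by omega) hcase
    rw [← hG] at hbb
    have hcut := hside u v huv
    omega
  -- classification: every side is all-small or all-big
  set smallP : Finset (NV b) → Prop := fun Sf => ∀ j, j < 4 → Yj Sf j < β with hsmallP
  set bigP : Finset (NV b) → Prop := fun Sf => ∀ j, j < 4 → b < Yj Sf j + β with hbigP
  have classify : ∀ u v : NV b, T.Adj u v → smallP (sf u v) ∨ bigP (sf u v) := by
    intro u v huv
    have t0 := tri u v huv 0 (by norm_num)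
    have t1 := tri u v huv 1 (by norm_num)
    have t2 := tri u v huv 2 (by norm_num)
    have t3 := tri u v huv 3 (by norm_num)
    have n0 := noBS u v huv 0 (by norm_num)
    have n1 := noBS u v huv 1 (by norm_num)
    have n2 := noBS u v huv 2 (by norm_num)
    have n3 := noBS u v huv 3 (by norm_num)
    norm_num at n0 n1 n2 n3
    by_cases h0 : b < Yj (sf u v) 0 + β
    · right
      intro j hj
      have h1 : b < Yj (sf u v) 1 + β := by
        have := n0.1 h0
        omega
      have h2 : b < Yj (sf u v) 2 + β := by
        have := n1.1 h1
        omega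
      have h3 : b < Yj (sf u v) 3 + β := by
        have := n2.1 h2
        omega
      interval_cases j <;> assumption
    · left
      intro j hj
      have h0' : Yj (sf u v) 0 < β := by omega
      have h3 : Yj (sf u v) 3 < β := by
        rcases t3 with h | h
        · exact h
        · have := n3.2
          omega
      have h2 : Yj (sf u v) 2 < β := by
        rcases t2 with h | h
        · exact h
        · have := n2.2
          omega
      have h1 : Yj (sf u v) 1 < β := by
        rcases t1 with h | h
        · exact h
        · have := n1.2
          omega
      interval_cases j <;> assumption
  -- complement counts
  have hcompl : ∀ u v : NV b, T.Adj u v → ∀ j, j < 4 →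
      Yj (sf u v) j + Yj (sf v u) j = b := by
    intro u v huv j hj
    have hvu : Yj (sf v u) j
        = (Finset.univ.filter (fun x : NV b => x ∉ sf u v ∧ comm x = j)).card := by
      rw [Yj]
      congr 1
      apply Finset.filter_congr
      intro x _
      have : x ∈ sf v u ↔ x ∉ sf u v := by
        rw [hsf_mem, hsf_mem, side_compl hTt huv]
        simp
      simp only [this]
    rw [hvu, Yj, card_split (fun x : NV b => comm x = j) (sf u v), card_commF hb j hj]
  -- exactly one side small
  have oneSmall : ∀ u v : NV b, T.Adj u v → smallP (sf u v) ∨ smallP (sf v u) := by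
    intro u v huv
    rcases classify u v huv with h | h
    · exact Or.inl h
    · right
      intro j hj
      have := hcompl u v huv j hj
      have := h j hj
      omega
  have notBoth : ∀ u v : NV b, T.Adj u v → smallP (sf u v) → smallP (sf v u) → False := by
    intro u v huv h1 h2
    have e := hcompl u v huv 0 (by norm_num)
    have := h1 0 (by norm_num)
    have := h2 0 (by norm_num)
    omega
  -- T has an edge
  have hNV2 : (1 : ℕ) < 4 * b := by omega
  obtain ⟨u0, v0, huv0⟩ : ∃ u v : NV b, T.Adj u v := by
    have hne : (⟨0, by omega⟩ : NV b) ≠ ⟨1, by omega⟩ := by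
      intro h
      have := congrArg Fin.val h
      simp at this
    obtain ⟨p⟩ := hTt.isConnected.preconnected ⟨0, by omega⟩ ⟨1, by omega⟩
    cases p with
    | cons hadj q => exact ⟨_, _, hadj⟩
  -- the finset of small ordered pairs
  set SP : Finset (NV b × NV b) :=
    Finset.univ.filter (fun p => T.Adj p.1 p.2 ∧ smallP (sf p.1 p.2)) with hSP
  have hSPne : SP.Nonempty := by
    rcases oneSmall u0 v0 huv0 with h | h
    · exact ⟨(u0, v0), by
        rw [hSP, Finset.mem_filter]
        exact ⟨Finset.mem_univ _, huv0, h⟩⟩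
    · exact ⟨(v0, u0), by
        rw [hSP, Finset.mem_filter]
        exact ⟨Finset.mem_univ _, huv0.symm, h⟩⟩
  obtain ⟨pm, hpmSP, hpmMax⟩ := Finset.exists_max_image SP (fun p => (sf p.1 p.2).card) hSPne
  rw [hSP, Finset.mem_filter] at hpmSP
  obtain ⟨-, hpmAdj, hpmSmall⟩ := hpmSP
  set ustar := pm.1 with hustar
  set v := pm.2 with hv
  -- all pieces at v are small
  have hPsmall : ∀ w : NV b, T.Adj v w → smallP (sf w v) := by
    intro w hw
    by_cases hwu : w = ustar
    · rw [hwu]; exact hpmSmall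
    rcases classify w v hw.symm with h | h
    · exact h
    · -- big piece: contradiction with maximality
      exfalso
      have hsmallvw : smallP (sf v w) := by
        intro j hj
        have := hcompl w v hw.symm j hj
        have := h j hj
        omega
      have hsub : sf ustar v ⊆ sf v w := by
        intro x hx
        rw [hsf_mem] at hx ⊢
        exact pieces_disjoint hTt hw hpmAdj.symm (fun he => hwu he) x hx
      have hvin : v ∈ sf v w := by
        rw [hsf_mem]
        exact mem_side_self T v w
      have hvnot : v ∉ sf ustar v := by
        rw [hsf_mem]
        exact not_mem_side hTt hpmAdj
      have hss : sf ustar v ⊂ sf v w := by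
        refine Finset.ssubset_iff_of_subset hsub |>.mpr ⟨v, hvin, hvnot⟩
      have hcard := Finset.card_lt_card hss
      have hmem : (v, w) ∈ SP := by
        rw [hSP, Finset.mem_filter]
        exact ⟨Finset.mem_univ _, hw, hsmallvw⟩
      have := hpmMax (v, w) hmem
      simp only at this
      omega
  -- coverage contradiction
  set c := comm v with hc
  have hc4 : c < 4 := comm_lt hb v
  set cstar := (c + 2) % 4 with hcstar
  have hcstar4 : cstar < 4 := Nat.mod_lt _ (by norm_num)
  have hcne : cstar ≠ c := by omega
  set cprev := (cstar + 3) % 4 with hcprev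
  have hcprev4 : cprev < 4 := Nat.mod_lt _ (by norm_num)
  have hcprevne : cprev ≠ cstar := by omega
  -- neighbors of v are not in community cstar
  have hnbr : ∀ w : NV b, G.Adj v w → comm w ≠ cstar := by
    intro w hw
    rw [hG, myG_adj] at hw
    have hw4 : comm w < 4 := comm_lt hb w
    rcases hw.2 with ⟨h1, -⟩ | ⟨h1, -⟩ | ⟨h1, -⟩
    · rw [← h1, ← hc]; omega
    · rw [← h1, ← hc]; omega
    · intro hcw
      rw [hcw] at h1
      rw [← hc] at h1
      omega
  -- main existence: each x in community cstar has a gateway in its piece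
  have hQ : ∀ x : NV b, comm x = cstar →
      ∃ p : NV b × NV b, (T.Adj v p.1 ∧ x ∈ side T p.1 v) ∧
        (p.2 ∈ side T p.1 v ∧ (D ≤ idx p.2 ∧ idx p.2 < D + s) ∧
         (comm p.2 = cprev ∨ comm p.2 = cstar)) := by
    intro x hx
    have hxv : x ≠ v := by
      intro h
      rw [h] at hx
      exact hcne (hx.symm.trans hc.symm)
    rcases pieces_cover hTt v x with h | ⟨w, hw, hxw⟩
    · exact absurd h hxv
    have hGvw : G.Adj v w := hTle hw
    have hwc : comm w ≠ cstar := hnbr w hGvw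
    -- walk from w to x in the deleted graph
    obtain ⟨p⟩ := (hxw : (T.deleteEdges {s(w, v)}).Reachable x w).symm
    obtain ⟨y, z, hyz, hysupp, hzsupp, hyA, hzA⟩ :=
      walk_crossing {z : NV b | comm z = cstar} p hwc hx
    have hyside : y ∈ side T w v := walk_support_in_side p y hysupp
    have hzside : z ∈ side T w v := walk_support_in_side p z hzsupp
    have hTyz : T.Adj y z := by
      have := hyz
      rw [SimpleGraph.deleteEdges_adj] at this
      exact this.1
    have hGyz : G.Adj y z := hTle hTyz
    rw [hG, myG_adj] at hGyz
    have hy4 : comm y < 4 := comm_lt hb y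
    have hzA' : comm z = cstar := hzA
    have hyA' : comm y ≠ cstar := hyA
    rcases hGyz.2 with ⟨h1, -⟩ | ⟨h1, h2⟩ | ⟨h1, h2⟩
    · exact absurd (h1.trans hzA') hyA'
    · -- (comm y + 1) % 4 = comm z,  y is a gateway
      refine ⟨(w, y), ⟨hw, hxw⟩, hyside, h2, Or.inl ?_⟩
      rw [hzA'] at h1
      rw [hcprev]
      interval_cases hy' : comm y <;> omega
    · -- (comm z + 1) % 4 = comm y, z is a gateway
      exact ⟨(w, z), ⟨hw, hxw⟩, hzside, h2, Or.inr hzA'⟩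
  -- choice function
  set f : NV b → NV b := fun x =>
    if h : comm x = cstar then (Classical.choose (hQ x h)).2 else v with hf
  set wf : NV b → NV b := fun x =>
    if h : comm x = cstar then (Classical.choose (hQ x h)).1 else v with hwf
  have hspec : ∀ x : NV b, (h : comm x = cstar) →
      (T.Adj v (wf x) ∧ x ∈ side T (wf x) v) ∧
      (f x ∈ side T (wf x) v ∧ (D ≤ idx (f x) ∧ idx (f x) < D + s) ∧
       (comm (f x) = cprev ∨ comm (f x) = cstar)) := by
    intro x h
    have := Classical.choose_spec (hQ x h)
    simp only [hf, hwf, dif_pos h]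
    exact this
  -- gateway target finset
  set Γ' : Finset (NV b) := Finset.univ.filter
    (fun g => (comm g = cprev ∨ comm g = cstar) ∧ (D ≤ idx g ∧ idx g < D + s)) with hΓ'
  have hΓcard : Γ'.card ≤ 2 * s := by
    have hsub : Γ' ⊆ (Finset.univ.filter
        (fun g : NV b => comm g = cprev ∧ (D ≤ idx g ∧ idx g < D + s)))
      ∪ (Finset.univ.filter
        (fun g : NV b => comm g = cstar ∧ (D ≤ idx g ∧ idx g < D + s))) := by
      intro g hg
      rw [hΓ', Finset.mem_filter] at hg
      rw [Finset.mem_union, Finset.mem_filter, Finset.mem_filter]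
      rcases hg.2.1 with h | h
      · exact Or.inl ⟨Finset.mem_univ _, h, hg.2.2⟩
      · exact Or.inr ⟨Finset.mem_univ _, h, hg.2.2⟩
    calc Γ'.card ≤ _ := Finset.card_le_card hsub
      _ ≤ _ + _ := Finset.card_union_le _ _
      _ ≤ 2 * s := by
          rw [card_gw hb hhs cprev hcprev4, card_gw hb hhs cstar hcstar4]
          omega
  -- the community cstar finset
  set Cstar : Finset (NV b) := Finset.univ.filter (fun x => comm x = cstar) with hCstar
  have hCstarCard : Cstar.card = b := card_commF hb cstar hcstar4
  have hfmem : ∀ x ∈ Cstar, f x ∈ Γ' := by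
    intro x hx
    rw [hCstar, Finset.mem_filter] at hx
    obtain ⟨-, hx⟩ := hx
    have := hspec x hx
    rw [hΓ', Finset.mem_filter]
    exact ⟨Finset.mem_univ _, this.2.2.2, this.2.2.1⟩
  have hfib := Finset.card_eq_sum_card_fiberwise hfmem
  -- fiber bound
  have hfiber : ∀ g ∈ Γ', (Cstar.filter (fun x => f x = g)).card ≤ β - 1 := by
    intro g hg
    rcases Finset.eq_empty_or_nonempty (Cstar.filter (fun x => f x = g)) with he | ⟨x₀, hx₀⟩
    · rw [he]
      simp
    rw [Finset.mem_filter, hCstar, Finset.mem_filter] at hx₀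
    obtain ⟨⟨-, hx₀c⟩, hx₀f⟩ := hx₀
    set w₀ := wf x₀ with hw₀
    have hspec₀ := hspec x₀ hx₀c
    -- all fiber elements live in side T w₀ v
    have hsubfib : Cstar.filter (fun x => f x = g)
        ⊆ Finset.univ.filter (fun x => x ∈ sf w₀ v ∧ comm x = cstar) := by
      intro x hx
      rw [Finset.mem_filter, hCstar, Finset.mem_filter] at hx
      obtain ⟨⟨-, hxc⟩, hxf⟩ := hx
      have hspecx := hspec x hxc
      rw [Finset.mem_filter]
      refine ⟨Finset.mem_univ _, ?_, hxc⟩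
      -- show wf x = w₀
      have hgx : g ∈ side T (wf x) v := by rw [← hxf]; exact hspecx.2.1
      have hg₀ : g ∈ side T w₀ v := by rw [← hx₀f]; exact hspec₀.2.1
      have hww : wf x = w₀ := by
        by_contra hne
        have := pieces_disjoint hTt hspec₀.1.1 hspecx.1.1 (fun he => hne he.symm) g hgx
        rw [side_compl hTt hspec₀.1.1.symm] at this
        exact this hg₀
      rw [hsf_mem]
      rw [← hww]
      exact hspecx.1.2
    have hYb : Yj (sf w₀ v) cstar < β := hPsmall w₀ hspec₀.1.1 cstar hcstar4
    have hfle : (Cstar.filter (fun x => f x = g)).card ≤ Yj (sf w₀ v) cstar :=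
      Finset.card_le_card hsubfib
    omega
  -- final contradiction
  have : Cstar.card ≤ Γ'.card * (β - 1) := by
    rw [hfib]
    calc ∑ g ∈ Γ', (Cstar.filter (fun x => f x = g)).card
        ≤ ∑ g ∈ Γ', (β - 1) := Finset.sum_le_sum hfiber
      _ = Γ'.card * (β - 1) := by rw [Finset.sum_const, smul_eq_mul]
  have hfinal : b ≤ 2 * s * (β - 1) := by
    calc b = Cstar.card := hCstarCard.symm
      _ ≤ Γ'.card * (β - 1) := this
      _ ≤ 2 * s * (β - 1) := Nat.mul_le_mul_right _ hΓcard
  have : 2 * s * (β - 1) < b := by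
    calc 2 * s * (β - 1) ≤ 2 * s * β := by
          apply Nat.mul_le_mul_left
          omega
      _ < b := hcover
  omega


-- square cancellation
lemma sq_cancel {a c : ℕ} (h : a * a ≤ c * c) : a ≤ c := by
  by_contra hlt
  push_neg at hlt
  have : c * c < a * a := Nat.mul_lt_mul_of_lt_of_le hlt (le_of_lt hlt) (by omega)
  omega

theorem final : ∃ c : ℝ, 0 < c ∧ ∃ n₀ : ℕ, ∀ n : ℕ, n₀ ≤ n → ∀ m : ℕ,
    16 * (n : ℝ) * Real.log n ≤ m → 100 * n ≤ m → (m : ℝ) ≤ (n : ℝ) ^ 2 / 2 →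
    ∃ (N : ℕ) (G : SimpleGraph (Fin N)), N ≤ 3 * n ∧ G.Connected ∧
      m ≤ numEdges G ∧ numEdges G ≤ 7 * m ∧
      c * Real.sqrt ((m : ℝ) * n) ≤ (STC G : ℝ) := by
  refine ⟨1/1000, by norm_num, 1000000, ?_⟩
  intro n hn m hlog h100 hsq
  -- basic nat facts
  have hm2 : 2 * m ≤ n ^ 2 := by
    have : ((2 * m : ℕ) : ℝ) ≤ ((n ^ 2 : ℕ) : ℝ) := by
      push_cast
      linarith
    exact_mod_cast this
  set b := 3 * n / 4 with hbdef
  set D := m / (2 * b) + 1 with hDdef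
  set s := Nat.sqrt D + 1 with hsdef
  set β := b / (16 * s) with hβdef
  set C := (D + s) * β / 2 with hCdef
  -- b bounds
  have hb4 : 4 * b ≤ 3 * n := by
    have := Nat.div_mul_le_self (3*n) 4
    rw [hbdef]
    omega
  have hb4' : 3 * n < 4 * b + 4 := by
    have h1 := Nat.div_add_mod (3*n) 4
    have h2 : (3*n) % 4 < 4 := Nat.mod_lt _ (by norm_num)
    rw [hbdef]
    omega
  have hbpos : 0 < b := by omega
  have hbn : b ≤ n := by omega
  have h2bn : n ≤ 2 * b := by omega
  have h2bm : 2 * b ≤ m := by omega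
  -- D bounds
  have hDpos : 0 < D := by rw [hDdef]; exact Nat.succ_pos _
  have hD1 : (D - 1) * (2 * b) ≤ m := by
    rw [hDdef]
    simp only [Nat.add_sub_cancel]
    exact Nat.div_mul_le_self _ _
  have hD2 : m < 2 * b * D := by
    rw [hDdef]
    have h1 := Nat.div_add_mod m (2*b)
    have h2 : m % (2*b) < 2*b := Nat.mod_lt _ (by omega)
    calc m < 2*b * (m / (2*b)) + 2*b := by omega
      _ = 2*b*(m/(2*b)+1) := by ring
  -- 3*(D-1) ≤ n+3
  have hD3 : 3 * (D - 1) ≤ n + 3 := by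
    have h1 : (D - 1) * (3 * n - 3) ≤ 2 * m := by
      calc (D-1) * (3*n-3) ≤ (D-1) * (4*b) := by
            apply Nat.mul_le_mul_left
            omega
        _ = 2 * ((D-1)*(2*b)) := by ring
        _ ≤ 2 * m := by omega
    have h2 : (D - 1) * (3 * n - 3) ≤ n ^ 2 := le_trans h1 hm2
    have h3 : 3 * (D-1) * (n-1) ≤ n * n := by
      calc 3 * (D-1) * (n-1) = (D-1) * (3 * (n-1)) := by ring
        _ = (D-1) * (3*n - 3) := by rw [show 3*(n-1) = 3*n-3 from by omega]
        _ ≤ n ^ 2 := h2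
        _ = n * n := by ring
    have h4gen : ∀ k : ℕ, 2 ≤ k → k * k ≤ (k + 3) * (k - 1) := by
      intro k hk
      obtain ⟨q, rfl⟩ : ∃ q, k = q + 1 := ⟨k - 1, by omega⟩
      have hq1 : 1 ≤ q := by omega
      simp only [Nat.add_sub_cancel]
      nlinarith
    have h4 : n * n ≤ (n + 3) * (n - 1) := h4gen n (by omega)
    have h5 : 3 * (D-1) * (n-1) ≤ (n+3) * (n-1) := le_trans h3 h4
    exact Nat.le_of_mul_le_mul_right h5 (by omega)
  have hDn : D ≤ n := by omega
  -- sqrt facts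
  have hq' : Nat.sqrt n * Nat.sqrt n ≤ n := by
    have := Nat.sqrt_le' n
    simpa [pow_two] using this
  have hq32 : 32 * Nat.sqrt n ≤ n := by
    apply sq_cancel
    calc 32 * Nat.sqrt n * (32 * Nat.sqrt n) = 1024 * (Nat.sqrt n * Nat.sqrt n) := by ring
      _ ≤ 1024 * n := Nat.mul_le_mul_left _ hq'
      _ ≤ n * n := by
          apply Nat.mul_le_mul_right
          omega
  have hsn : s ≤ Nat.sqrt n + 1 := by
    rw [hsdef]
    have := Nat.sqrt_le_sqrt hDn
    omega
  have hspos : 0 < s := by omega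
  have hs2D : D < s * s := by
    rw [hsdef]
    have := Nat.lt_succ_sqrt' D
    simpa [pow_two, Nat.succ_eq_add_one] using this
  have hs4D : s * s ≤ 4 * D := by
    rw [hsdef]
    have h1 : 1 ≤ Nat.sqrt D := by
      rw [Nat.le_sqrt']
      omega
    have h2 : Nat.sqrt D * Nat.sqrt D ≤ D := by
      have := Nat.sqrt_le' D
      simpa [pow_two] using this
    nlinarith
  -- h: 2*(D+s) ≤ b
  have hhs2 : 2 * (D + s) ≤ b := by
    have hq11 : 11 ≤ Nat.sqrt n := by
      rw [Nat.le_sqrt']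
      omega
    omega
  have hhs : D + s ≤ b := by omega
  -- β facts
  have h16sb : 16 * s ≤ b := by
    have hq11 : 11 ≤ Nat.sqrt n := by
      rw [Nat.le_sqrt']
      omega
    omega
  have hβpos : 0 < β := by
    rw [hβdef]
    exact Nat.one_le_div_iff (by omega) |>.mpr h16sb
  have hβ16 : 16 * (s * β) ≤ b := by
    have h1 : β * (16 * s) ≤ b := Nat.div_mul_le_self b (16*s)
    calc 16 * (s * β) = β * (16 * s) := by ring
      _ ≤ b := h1
  have hb32 : b ≤ 32 * (s * β) := by
    have h1 : b < (16*s) * (b / (16*s)) + 16*s := by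
      have ha := Nat.div_add_mod b (16*s)
      have hb' : b % (16*s) < 16*s := Nat.mod_lt _ (by omega)
      omega
    have h2 : (16*s) * β = 16 * (s * β) := by rw [hβdef]; ring
    have h3 : 16 * s ≤ 16 * (s * β) := by
      calc 16 * s = 16 * (s * 1) := by ring
        _ ≤ 16 * (s * β) := by
            apply Nat.mul_le_mul_left
            exact Nat.mul_le_mul_left _ hβpos
    calc b ≤ (16*s) * (b/(16*s)) + 16*s := le_of_lt h1
      _ = 16*(s*β) + 16*s := by rw [← hβdef, h2]
      _ ≤ 16*(s*β) + 16*(s*β) := by omega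
      _ = 32*(s*β) := by ring
  have hsβpos : 1 ≤ s * β := Nat.one_le_iff_ne_zero.mpr (by positivity)
  have hcover : 2 * s * β < b := by
    have h1 : 2 * s * β = 2 * (s * β) := by ring
    omega
  -- C facts
  have hCsplit : 2 * C ≤ (D+s) * β := by
    calc 2 * C = ((D+s)*β)/2 * 2 := by rw [hCdef]; ring
      _ ≤ (D+s)*β := Nat.div_mul_le_self _ _
  have hCpos : 0 < C := by
    rw [hCdef]
    have h2X : 2 ≤ (D+s) * β := by
      calc 2 = 2 * 1 := by norm_num
        _ ≤ (D+s) * β := Nat.mul_le_mul (by omega) hβpos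
    exact Nat.le_div_iff_mul_le (by norm_num) |>.mpr (by omega)
  have hCss : C ≤ s * (s * β) := by
    have h1 : (D+s) * β ≤ 2 * (s * (s*β)) := by
      calc (D+s) * β ≤ (2*(s*s)) * β := by
            apply Nat.mul_le_mul_right
            have hss : s ≤ s * s := Nat.le_mul_of_pos_left s hspos
            omega
        _ = 2 * (s * (s*β)) := by ring
    have h2 := Nat.div_le_div_right (c := 2) h1
    rw [Nat.mul_div_cancel_left _ (by norm_num : 0 < 2)] at h2
    rw [hCdef]
    exact h2
  have hCbundle : C + s * β ≤ s * b := by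
    have h1 : s * (s*β) + s*β ≤ 2 * (s * (s*β)) := by
      have : s*β ≤ s * (s*β) := by
        calc s*β = 1 * (s*β) := by ring
          _ ≤ s * (s*β) := Nat.mul_le_mul_right _ hspos
      omega
    have h2 : 2 * (s * (s*β)) ≤ s * b := by
      calc 2 * (s * (s*β)) ≤ 16 * (s * (s*β)) := by omega
        _ = s * (16 * (s*β)) := by ring
        _ ≤ s * b := Nat.mul_le_mul_left _ hβ16
    omega
  -- the main numeric inequality
  have hDβC : D * β ≤ 3 * C := by
    have h1 : D * β ≤ (D+s) * β := Nat.mul_le_mul_right _ (by omega)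
    have h2 : (D+s)*β ≤ 2*C + 1 := by
      have hdm := Nat.div_add_mod ((D+s)*β) 2
      have hml : ((D+s)*β) % 2 < 2 := Nat.mod_lt _ (by norm_num)
      rw [hCdef]
      omega
    omega
  have hmn : m * n ≤ 1000000 * (C * C) := by
    have k1 : m * n ≤ (2*b*D) * (2*b) := Nat.mul_le_mul (le_of_lt hD2) h2bn
    have k3 : b * b ≤ (32*(s*β)) * (32*(s*β)) := Nat.mul_le_mul hb32 hb32
    have k5 : (32*(s*β)) * (32*(s*β)) ≤ 4096 * (D * (β*β)) := by
      calc (32*(s*β)) * (32*(s*β)) = 1024 * ((s*s) * (β*β)) := by ring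
        _ ≤ 1024 * ((4*D) * (β*β)) := by
            apply Nat.mul_le_mul_left
            exact Nat.mul_le_mul_right _ hs4D
        _ = 4096 * (D * (β*β)) := by ring
    have k6 : m * n ≤ 16384 * ((D*β) * (D*β)) := by
      calc m * n ≤ (2*b*D) * (2*b) := k1
        _ = 4 * (b*b) * D := by ring
        _ ≤ 4 * (4096 * (D * (β*β))) * D := by
            apply Nat.mul_le_mul_right
            apply Nat.mul_le_mul_left
            exact le_trans k3 k5
        _ = 16384 * ((D*β) * (D*β)) := by ring
    have k7 : (D*β) * (D*β) ≤ (3*C) * (3*C) := Nat.mul_le_mul hDβC hDβC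
    calc m * n ≤ 16384 * ((D*β) * (D*β)) := k6
      _ ≤ 16384 * ((3*C) * (3*C)) := Nat.mul_le_mul_left _ k7
      _ = 147456 * (C*C) := by ring
      _ ≤ 1000000 * (C*C) := Nat.mul_le_mul_right _ (by norm_num)
  -- graph instance
  refine ⟨4 * b, myG b D s, by omega, myG_connected hbpos hDpos hspos hhs, ?_, ?_, ?_⟩
  · -- m ≤ numEdges
    have h1 : b ≤ 2 * (b - (D+s)) := by omega
    have h2 : 2*b*D ≤ 4 * (D * (b - (D+s))) := by
      calc 2*b*D = D * (2*b) := by ring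
        _ ≤ D * (4 * (b - (D+s))) := by
            apply Nat.mul_le_mul_left
            omega
        _ = 4 * (D * (b - (D+s))) := by ring
    have := edges_lower hbpos hDpos hspos hhs (s := s)
    omega
  · -- numEdges ≤ 7m
    have hup := edges_upper (D := D) (s := s) hbpos hhs
    have h4Db : 4 * (D * b) ≤ 3 * m := by
      have hsplitD : 2*b*D = (D-1)*(2*b) + 2*b := by
        obtain ⟨k, hk⟩ : ∃ k, D = k + 1 := ⟨D - 1, by omega⟩
        rw [hk]
        simp only [Nat.add_sub_cancel]
        ring
      have h1 : 2*b*D ≤ m + 2*b := by omega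
      have h2 : 4 * (D*b) = 2 * (2*b*D) := by ring
      omega
    have h8sb : 8 * (s * b) ≤ 2 * m := by
      apply sq_cancel
      have c1 : (8*(s*b)) * (8*(s*b)) = 64 * ((s*s) * (b*b)) := by ring
      have c2 : 64 * ((s*s) * (b*b)) ≤ 64 * ((4*D) * (b*b)) := by
        apply Nat.mul_le_mul_left
        exact Nat.mul_le_mul_right _ hs4D
      have c3 : 64 * ((4*D) * (b*b)) = 128 * (b * (2*b*D)) := by ring
      have hsplitD : 2*b*D = (D-1)*(2*b) + 2*b := by
        obtain ⟨k, hk⟩ : ∃ k, D = k + 1 := ⟨D - 1, by omega⟩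
        rw [hk]
        simp only [Nat.add_sub_cancel]
        ring
      have h1 : 2*b*D ≤ m + 2*b := by omega
      have h1' : 2*b*D ≤ 2*m := by omega
      have c4 : 128 * (b * (2*b*D)) ≤ 128 * (b * (2*m)) :=
        Nat.mul_le_mul_left _ (Nat.mul_le_mul_left _ h1')
      have c5 : 128 * (b * (2*m)) = 256 * (b * m) := by ring
      have c6 : 256 * (b*m) ≤ 256 * (n*m) :=
        Nat.mul_le_mul_left _ (Nat.mul_le_mul_right _ hbn)
      have c7 : 100 * (256 * (n*m)) ≤ 256 * (m*m) := by
        calc 100 * (256 * (n*m)) = 256 * ((100*n) * m) := by ring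
          _ ≤ 256 * (m * m) := by
              apply Nat.mul_le_mul_left
              exact Nat.mul_le_mul_right _ h100
      have c8 : 100 * ((8*(s*b)) * (8*(s*b))) ≤ 100 * ((2*m)*(2*m)) := by
        calc 100 * ((8*(s*b)) * (8*(s*b))) ≤ 100 * (256 * (n*m)) := by
              apply Nat.mul_le_mul_left
              omega
          _ ≤ 256 * (m*m) := c7
          _ ≤ 400 * (m*m) := Nat.mul_le_mul_right _ (by norm_num)
          _ = 100 * ((2*m)*(2*m)) := by ring
      exact Nat.le_of_mul_le_mul_left c8 (by norm_num)
    have hsplit4 : 4 * ((D+s)*b) + 4 * (s*b) = 4*(D*b) + 8*(s*b) := by ring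
    omega
  · -- congestion bound
    have hSTC : C ≤ STC (myG b D s) := by
      apply le_STC (myG_connected hbpos hDpos hspos hhs)
      intro T hT
      exact main_lb b D s β C hbpos hDpos hspos hβpos hhs hhs2 hCsplit hCbundle
        (by rw [mul_assoc]; omega) T hT
    have hcast : ((m:ℝ) * n) ≤ ((1000*C : ℕ) : ℝ) * ((1000*C : ℕ) : ℝ) := by
      have : ((m*n : ℕ) : ℝ) ≤ (((1000*C) * (1000*C) : ℕ) : ℝ) := by
        exact_mod_cast (by calc m*n ≤ 1000000*(C*C) := hmn
                            _ = (1000*C)*(1000*C) := by ring)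
      push_cast at this ⊢
      linarith
    have hsqrt : Real.sqrt ((m:ℝ) * n) ≤ ((1000*C : ℕ) : ℝ) := by
      have h0 : (0:ℝ) ≤ ((1000*C : ℕ) : ℝ) := by positivity
      calc Real.sqrt ((m:ℝ)*n) ≤ Real.sqrt (((1000*C:ℕ):ℝ) * ((1000*C:ℕ):ℝ)) :=
            Real.sqrt_le_sqrt hcast
        _ = ((1000*C:ℕ):ℝ) := Real.sqrt_mul_self h0
    have hSTCcast : ((C:ℕ):ℝ) ≤ (STC (myG b D s) : ℝ) := by exact_mod_cast hSTC
    calc (1/1000 : ℝ) * Real.sqrt ((m:ℝ)*n) ≤ (1/1000) * ((1000*C:ℕ):ℝ) := by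
          apply mul_le_mul_of_nonneg_left hsqrt
          norm_num
      _ = (C:ℝ) := by push_cast; ring
      _ ≤ (STC (myG b D s) : ℝ) := hSTCcast


end STCProof

open STCPaper in
/-- Lower bound: graphs with spanning tree congestion `Ω(√(mn))`. -/
theorem stmt_7 :
    ∃ c : ℝ, 0 < c ∧ ∃ n₀ : ℕ, ∀ n : ℕ, n₀ ≤ n → ∀ m : ℕ,
      16 * (n : ℝ) * Real.log n ≤ m → 100 * n ≤ m → (m : ℝ) ≤ (n : ℝ) ^ 2 / 2 →
      ∃ (N : ℕ) (G : SimpleGraph (Fin N)), N ≤ 3 * n ∧ G.Connected ∧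
        m ≤ numEdges G ∧ numEdges G ≤ 7 * m ∧
        c * Real.sqrt ((m : ℝ) * n) ≤ (STC G : ℝ) := by
  exact STCProof.final
end

section
/- For all sufficiently large integers n and every integer m with 16·n·ln n ≤ m ≤ n²/2, there exists a connected finite simple graph H on n vertices whose number of edges lies between m/2 and 2m, such that for every vertex set S with |S| ≤ n/2, the number of edges of H with exactly one endpoint in S is at least (m/(2n))·|S|. -/
open SimpleGraph

set_option maxHeartbeats 2000000

open STCPaper in
/-- Existence of an `n`-vertex edge expander `H(n,m)` with between `m/2` and `2m` edges. -/
theorem stmt_8 :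
    ∃ n₀ : ℕ, ∀ n : ℕ, n₀ ≤ n → ∀ m : ℕ,
      16 * (n : ℝ) * Real.log n ≤ m → (m : ℝ) ≤ (n : ℝ) ^ 2 / 2 →
      ∃ H : SimpleGraph (Fin n), H.Connected ∧
        (m : ℝ) / 2 ≤ (numEdges H : ℝ) ∧ (numEdges H : ℝ) ≤ 2 * m ∧
        ∀ S : Finset (Fin n), (S.card : ℝ) ≤ (n : ℝ) / 2 →
          (m : ℝ) / (2 * n) * S.card ≤ (cutCount H ↑S : ℝ) := by

  classical
  refine ⟨4, fun n hn m hm1 hm2 => ?_⟩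
  have hnpos : 0 < n := by omega
  have hnR : (4:ℝ) ≤ n := by exact_mod_cast hn
  have hnRpos : (0:ℝ) < n := by linarith
  have hlog : (1:ℝ) ≤ Real.log n := by
    rw [Real.le_log_iff_exp_le hnRpos]
    have := Real.exp_one_lt_d9
    nlinarith
  have hmR : 16 * (n:ℝ) ≤ m := by nlinarith
  have hm2n : 2 * n ≤ m := by
    have : ((2*n : ℕ) : ℝ) ≤ (m:ℝ) := by push_cast; nlinarith
    exact_mod_cast this
  have h2m : 2 * m ≤ n * n := by
    have : ((2*m : ℕ) : ℝ) ≤ ((n*n : ℕ) : ℝ) := by push_cast; nlinarith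
    exact_mod_cast this
  set q := m / n with hq
  set a := q + 2 with ha
  have hqn : q * n ≤ m := Nat.div_mul_le_self m n
  have h2q : 2 * q ≤ n := by
    have h : (2 * q) * n ≤ n * n := by nlinarith
    exact Nat.le_of_mul_le_mul_right h hnpos
  have han : a ≤ n := by omega
  have hmlt : m < (q + 1) * n := by
    have h1 := Nat.div_add_mod m n
    have h2 := Nat.mod_lt m hnpos
    have h3 : (q+1)*n = n*(m/n) + n := by rw [hq]; ring
    rw [h3]; omega
  -- real versions
  have haR : (2:ℝ) ≤ (a:ℝ) := by exact_mod_cast (by omega : 2 ≤ a)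
  have hanR : (a:ℝ) ≤ n := by exact_mod_cast han
  have hmanq : (m:ℝ) < ((q:ℝ) + 1) * n := by
    have : ((m:ℕ) : ℝ) < (((q+1)*n : ℕ) : ℝ) := by exact_mod_cast hmlt
    push_cast at this; linarith
  have hanq : (q:ℝ) + 2 ≤ (n:ℝ) := by
    have : (((q+2) : ℕ) : ℝ) ≤ ((n:ℕ) : ℝ) := by exact_mod_cast (by omega : q + 2 ≤ n)
    push_cast at this; linarith
  have hacast : (a:ℝ) = (q:ℝ) + 2 := by rw [ha]; push_cast; ring
  have hman'' : (m:ℝ) ≤ (a:ℝ) * n := by rw [hacast]; nlinarith [hmanq, hnRpos]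
  -- the vertex set A
  set A : Finset (Fin n) := (Finset.univ : Finset (Fin a)).map (Fin.castLEEmb han) with hAdef
  have hAmem : ∀ i : Fin n, i ∈ A ↔ (i : ℕ) < a := by
    intro i
    rw [hAdef]
    simp only [Finset.mem_map, Finset.mem_univ, true_and]
    constructor
    · rintro ⟨j, rfl⟩; exact j.isLt
    · intro h; exact ⟨⟨i, h⟩, rfl⟩
  have hAcard : A.card = a := by rw [hAdef]; simp
  -- the graph
  set H : SimpleGraph (Fin n) :=
    { Adj := fun u v => u ≠ v ∧ ((u:ℕ) < a ∨ (v:ℕ) < a)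
      symm := ⟨fun u v h => ⟨h.1.symm, h.2.symm⟩⟩
      loopless := ⟨fun v h => h.1 rfl⟩ } with hHdef
  have hHadj : ∀ u v : Fin n, H.Adj u v ↔ u ≠ v ∧ ((u:ℕ) < a ∨ (v:ℕ) < a) := fun u v => Iff.rfl
  -- connectivity
  have hconn : H.Connected := by
    rw [SimpleGraph.connected_iff]
    refine ⟨?_, ⟨⟨0, hnpos⟩⟩⟩
    have r0 : ∀ w : Fin n, H.Reachable w ⟨0, hnpos⟩ := by
      intro w
      by_cases hw : w = ⟨0, hnpos⟩
      · rw [hw]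
      · exact SimpleGraph.Adj.reachable ⟨hw, Or.inr (show (0:ℕ) < a by omega)⟩
    exact fun u v => (r0 u).trans (r0 v).symm
  -- edge count upper bound
  have hupper : H.edgeSet.ncard ≤ a * n := by
    have hsub : H.edgeSet ⊆ ↑((A ×ˢ (Finset.univ : Finset (Fin n))).image Sym2.mk.uncurry) := by
      intro e
      induction e using Sym2.ind with
      | _ u v =>
        intro he
        rw [SimpleGraph.mem_edgeSet] at he
        rcases he.2 with h | h
        · exact Finset.mem_coe.2 (Finset.mem_image.2 ⟨(u,v), Finset.mem_product.2 ⟨(hAmem u).2 h, Finset.mem_univ _⟩, rfl⟩)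
        · refine Finset.mem_coe.2 (Finset.mem_image.2 ⟨(v,u), Finset.mem_product.2 ⟨(hAmem v).2 h, Finset.mem_univ _⟩, ?_⟩)
          exact (Sym2.eq_swap (a := u) (b := v)).symm
    calc H.edgeSet.ncard ≤ (↑((A ×ˢ (Finset.univ : Finset (Fin n))).image Sym2.mk.uncurry) : Set (Sym2 (Fin n))).ncard :=
          Set.ncard_le_ncard hsub (Set.toFinite _)
      _ = ((A ×ˢ (Finset.univ : Finset (Fin n))).image Sym2.mk.uncurry).card := Set.ncard_coe_finset _
      _ ≤ (A ×ˢ (Finset.univ : Finset (Fin n))).card := Finset.card_image_le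
      _ = a * n := by rw [Finset.card_product, hAcard, Finset.card_univ, Fintype.card_fin]
  -- edge count lower bound
  have hlower : a * (n - 1) ≤ 2 * H.edgeSet.ncard := by
    set s0 : Finset (Fin n × Fin n) := (A ×ˢ (Finset.univ : Finset (Fin n))).filter (fun p => p.1 ≠ p.2) with hs0
    have hs0card : s0.card = a * (n - 1) := by
      have hsplit := Finset.card_filter_add_card_filter_not
        (s := A ×ˢ (Finset.univ : Finset (Fin n))) (p := fun p => p.1 = p.2)
      have hdiag : (A ×ˢ (Finset.univ : Finset (Fin n))).filter (fun p => p.1 = p.2)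
          = A.image (fun u => (u, u)) := by
        ext ⟨u, v⟩
        simp only [Finset.mem_filter, Finset.mem_product, Finset.mem_univ, and_true,
          Finset.mem_image]
        constructor
        · rintro ⟨hu, rfl⟩; exact ⟨u, hu, rfl⟩
        · rintro ⟨w, hw, h⟩; cases h; exact ⟨hw, rfl⟩
      have hdiagcard : ((A ×ˢ (Finset.univ : Finset (Fin n))).filter (fun p => p.1 = p.2)).card = a := by
        rw [hdiag, Finset.card_image_of_injective _ (fun x y h => congrArg Prod.fst h), hAcard]
      have hfull : (A ×ˢ (Finset.univ : Finset (Fin n))).card = a * n := by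
        rw [Finset.card_product, hAcard, Finset.card_univ, Fintype.card_fin]
      have hs0eq : s0 = (A ×ˢ (Finset.univ : Finset (Fin n))).filter (fun p => ¬ p.1 = p.2) := rfl
      have htot : s0.card + ((A ×ˢ (Finset.univ : Finset (Fin n))).filter (fun p => p.1 = p.2)).card
          = (A ×ˢ (Finset.univ : Finset (Fin n))).card := by
        rw [hs0eq, add_comm]; exact hsplit
      rw [hdiagcard, hfull] at htot
      have hexpand : a * n = a * (n - 1) + a := by
        conv_lhs => rw [← Nat.succ_pred_eq_of_pos hnpos]
        rw [Nat.mul_succ, Nat.pred_eq_sub_one]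
      omega
    have hfib : ∀ b ∈ s0.image Sym2.mk.uncurry, (s0.filter fun p => Sym2.mk.uncurry p = b).card ≤ 2 := by
      intro b hb
      obtain ⟨⟨x, y⟩, _, rfl⟩ := Finset.mem_image.1 hb
      have hsubfib : (s0.filter fun p => Sym2.mk.uncurry p = Sym2.mk.uncurry (x, y)) ⊆ {(x, y), (y, x)} := by
        intro ⟨u, v⟩ hu
        have := (Finset.mem_filter.1 hu).2
        replace this := (Sym2.mk_eq_mk_iff (p := (u, v)) (q := (x, y))).1 this
        rcases this with h | h
        · simp [h]
        · simp at h; simp [h]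
      calc (s0.filter fun p => Sym2.mk.uncurry p = Sym2.mk.uncurry (x, y)).card
          ≤ ({(x, y), (y, x)} : Finset (Fin n × Fin n)).card := Finset.card_le_card hsubfib
        _ ≤ 2 := Finset.card_insert_le _ _ |>.trans (by simp)
    have himg : ↑(s0.image Sym2.mk.uncurry) ⊆ H.edgeSet := by
      intro e he
      obtain ⟨⟨u, v⟩, hp, rfl⟩ := Finset.mem_image.1 (Finset.mem_coe.1 he)
      rw [hs0, Finset.mem_filter, Finset.mem_product] at hp
      exact (H.mem_edgeSet).2 ⟨hp.2, Or.inl ((hAmem u).1 hp.1.1)⟩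
    calc a * (n - 1) = s0.card := hs0card.symm
      _ ≤ 2 * (s0.image Sym2.mk.uncurry).card := Finset.card_le_mul_card_image s0 2 hfib
      _ ≤ 2 * H.edgeSet.ncard := by
          have h1 : (↑(s0.image Sym2.mk.uncurry) : Set (Sym2 (Fin n))).ncard ≤ H.edgeSet.ncard :=
            Set.ncard_le_ncard himg (Set.toFinite _)
          rw [Set.ncard_coe_finset] at h1
          omega
  refine ⟨H, hconn, ?_, ?_, ?_⟩ <;> simp only [STCPaper.numEdges, STCPaper.cutCount]
  · -- m/2 ≤ numEdges
    have h1 : ((a * (n-1) : ℕ) : ℝ) ≤ ((2 * H.edgeSet.ncard : ℕ) : ℝ) := by exact_mod_cast hlower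
    have h2 : ((n - 1 : ℕ) : ℝ) = (n:ℝ) - 1 := by
      rw [Nat.cast_sub hnpos]; simp
    push_cast [h2] at h1
    nlinarith [hmanq, hanq, h1, hnRpos]
  · -- numEdges ≤ 2m
    have h1 : a * n ≤ 2 * m := by
      have : a * n = q * n + 2 * n := by rw [ha]; ring
      omega
    have : H.edgeSet.ncard ≤ 2 * m := le_trans hupper h1
    exact_mod_cast this
  · -- cut bound
    intro S hS
    set s₁ := (S ∩ A).card with hs₁
    set s₂ := (S \ A).card with hs₂
    set c := (Sᶜ : Finset (Fin n)).card with hc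
    set t := (A \ S).card with ht
    set P : Finset (Fin n × Fin n) := ((S ∩ A) ×ˢ (Sᶜ : Finset (Fin n))) ∪ ((S \ A) ×ˢ (A \ S)) with hP
    have hPmem : ∀ p ∈ P, p.1 ∈ S ∧ p.2 ∉ S ∧ H.Adj p.1 p.2 := by
      intro ⟨u, v⟩ hp
      rw [hP, Finset.mem_union, Finset.mem_product, Finset.mem_product] at hp
      rcases hp with ⟨h1, h2⟩ | ⟨h1, h2⟩
      · rw [Finset.mem_inter] at h1
        rw [Finset.mem_compl] at h2
        exact ⟨h1.1, h2, fun huv => h2 (huv ▸ h1.1), Or.inl ((hAmem u).1 h1.2)⟩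
      · rw [Finset.mem_sdiff] at h1 h2
        exact ⟨h1.1, h2.2, fun huv => h2.2 (huv ▸ h1.1), Or.inr ((hAmem v).1 h2.1)⟩
    have hPcard : P.card = s₁ * c + s₂ * t := by
      rw [hP, Finset.card_union_of_disjoint, Finset.card_product, Finset.card_product]
      rw [Finset.disjoint_left]
      rintro ⟨u, v⟩ h1 h2
      rw [Finset.mem_product, Finset.mem_inter] at h1
      rw [Finset.mem_product, Finset.mem_sdiff] at h2
      exact h2.1.2 h1.1.2
    have hinj : Set.InjOn (fun p : Fin n × Fin n => Sym2.mk.uncurry p) ↑P := by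
      intro p hp p' hp' heq
      have h1 := hPmem p (Finset.mem_coe.1 hp)
      have h2 := hPmem p' (Finset.mem_coe.1 hp')
      simp only at heq
      replace heq := (Sym2.mk_eq_mk_iff (p := p) (q := p')).1 heq
      rcases heq with h | h
      · exact h
      · exfalso
        have : p.1 = p'.2 := by
          have := congrArg Prod.fst h; simpa using this
        exact h2.2.1 (this ▸ h1.1)
    have himgsub : ↑(P.image Sym2.mk.uncurry) ⊆
        {e ∈ H.edgeSet | ∃ x y, e = s(x, y) ∧ x ∈ (↑S : Set (Fin n)) ∧ y ∉ (↑S : Set (Fin n))} := by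
      intro e he
      obtain ⟨p, hp, rfl⟩ := Finset.mem_image.1 (Finset.mem_coe.1 he)
      obtain ⟨h1, h2, h3⟩ := hPmem p hp
      exact ⟨(H.mem_edgeSet).2 h3, p.1, p.2, rfl, h1, h2⟩
    have hcut : s₁ * c + s₂ * t ≤
        {e ∈ H.edgeSet | ∃ x y, e = s(x, y) ∧ x ∈ (↑S : Set (Fin n)) ∧ y ∉ (↑S : Set (Fin n))}.ncard := by
      calc s₁ * c + s₂ * t = P.card := hPcard.symm
        _ = (P.image Sym2.mk.uncurry).card := (Finset.card_image_of_injOn hinj).symm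
        _ = (↑(P.image Sym2.mk.uncurry) : Set (Sym2 (Fin n))).ncard := (Set.ncard_coe_finset _).symm
        _ ≤ _ := Set.ncard_le_ncard himgsub (Set.toFinite _)
    -- arithmetic
    have hs12 : s₁ + s₂ = S.card := by
      have := Finset.card_inter_add_card_sdiff S A
      omega
    have hcn : c + S.card = n := by
      rw [hc, add_comm]
      have := Finset.card_add_card_compl S
      rw [Fintype.card_fin] at this
      exact this
    have hts : t + s₁ = a := by
      rw [ht, hs₁, Finset.inter_comm]
      have := Finset.card_sdiff_add_card_inter A S
      omega
    -- to reals
    have hcutR : ((s₁ * c + s₂ * t : ℕ) : ℝ) ≤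
        (({e ∈ H.edgeSet | ∃ x y, e = s(x, y) ∧ x ∈ (↑S : Set (Fin n)) ∧ y ∉ (↑S : Set (Fin n))}.ncard : ℕ) : ℝ) := by
      exact_mod_cast hcut
    push_cast at hcutR
    refine le_trans ?_ hcutR
    have hs12R : (s₁:ℝ) + s₂ = S.card := by exact_mod_cast hs12
    have hcnR : (c:ℝ) + S.card = n := by exact_mod_cast hcn
    have htsR : (t:ℝ) + s₁ = a := by exact_mod_cast hts
    clear hcut himgsub hinj hPcard hPmem hP hcutR
    clear_value P
    clear P
    clear_value s₁ s₂ c t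
    clear hs₁ hs₂ hc ht hs12 hcn hts
    clear hconn hupper hlower hHadj hHdef
    clear_value H
    clear H
    clear hAmem hAcard hAdef
    clear_value A
    clear A
    have hmpos : (0:ℝ) ≤ m := Nat.cast_nonneg m
    have h0s₁ : (0:ℝ) ≤ s₁ := Nat.cast_nonneg s₁
    have h0s₂ : (0:ℝ) ≤ s₂ := Nat.cast_nonneg s₂
    have h0c : (0:ℝ) ≤ c := Nat.cast_nonneg c
    have h0t : (0:ℝ) ≤ t := Nat.cast_nonneg t
    rw [div_mul_eq_mul_div, div_le_iff₀ (by positivity)]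
    -- goal : m * S.card ≤ (s₁*c + s₂*t) * (2*n)
    rw [← hs12R]
    by_cases hcase : (a:ℝ) ≤ 2 * s₁
    · have hcge : (n:ℝ)/2 ≤ c := by linarith [hS, hcnR]
      have k1 : (m:ℝ) * ((s₁:ℝ) + s₂) ≤ m * ((n:ℝ)/2) :=
        mul_le_mul_of_nonneg_left (by rw [hs12R]; exact hS) hmpos
      have k2 : (m:ℝ) * ((n:ℝ)/2) ≤ ((a:ℝ)*n) * ((n:ℝ)/2) :=
        mul_le_mul_of_nonneg_right hman'' (by linarith)
      have w : (a:ℝ) * ((n:ℝ)/2) ≤ (2*(s₁:ℝ)) * c :=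
        mul_le_mul hcase hcge (by linarith) (by linarith)
      have k3 : ((a:ℝ)*n) * ((n:ℝ)/2) ≤ ((s₁:ℝ)*c) * (2*n) := by nlinarith [w, hnRpos.le]
      have k4 : (0:ℝ) ≤ ((s₂:ℝ)*t) * (2*n) :=
        mul_nonneg (mul_nonneg h0s₂ h0t) (by linarith)
      nlinarith [k1, k2, k3, k4]
    · push_neg at hcase
      have htge : (a:ℝ)/2 ≤ t := by linarith
      have hcge : (n:ℝ)/2 ≤ c := by linarith [hS, hcnR]
      have hm2nc : (m:ℝ) ≤ 2*(n:ℝ)*c := by nlinarith [hman'', hanR, hcge, hnRpos.le]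
      have hm2nt : (m:ℝ) ≤ 2*(n:ℝ)*t := by nlinarith [hman'', htge, hnRpos.le]
      have h1 : (m:ℝ) * s₁ ≤ 2*(n:ℝ)*c * s₁ := mul_le_mul_of_nonneg_right hm2nc h0s₁
      have h2 : (m:ℝ) * s₂ ≤ 2*(n:ℝ)*t * s₂ := mul_le_mul_of_nonneg_right hm2nt h0s₂
      nlinarith [h1, h2]
end

section
/- For every integer n ≥ 4 and every real p with 32·(ln n)/n ≤ p ≤ 1, in the Erdős–Rényi random graph G(n,p) the probability that there exists a vertex set S with |S| ≤ n/2 such that the number of edges with exactly one endpoint in S is less than (p/2)·|S|·(n−|S|) is at most 2/n. -/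
open SimpleGraph

section STC9Aux

open Finset MeasureTheory

open STCPaper

variable {n : ℕ}

def stc9CrossPairs (S : Finset (Fin n)) : Finset (Sym2 (Fin n)) :=
  Finset.image (fun ab : Fin n × Fin n => s(ab.1, ab.2)) (S ×ˢ Sᶜ)

lemma stc9_mem_crossPairs {S : Finset (Fin n)} {e : Sym2 (Fin n)} :
    e ∈ stc9CrossPairs S ↔ ∃ a b, e = s(a, b) ∧ a ∈ S ∧ b ∉ S := by
  simp only [stc9CrossPairs, Finset.mem_image, Finset.mem_product, Finset.mem_compl, Prod.exists]
  constructor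
  · rintro ⟨a, b, ⟨ha, hb⟩, rfl⟩; exact ⟨a, b, rfl, ha, hb⟩
  · rintro ⟨a, b, rfl, ha, hb⟩; exact ⟨a, b, ⟨ha, hb⟩, rfl⟩

lemma stc9_card_crossPairs (S : Finset (Fin n)) :
    (stc9CrossPairs S).card = S.card * (n - S.card) := by
  rw [stc9CrossPairs, Finset.card_image_of_injOn, Finset.card_product, Finset.card_compl,
    Fintype.card_fin]
  rintro ⟨a, b⟩ hab ⟨c, d⟩ hcd h
  simp only [Finset.coe_product, Set.mem_prod, Finset.mem_coe, Finset.mem_compl] at hab hcd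
  simp only [Sym2.eq_iff] at h
  rcases h with ⟨rfl, rfl⟩ | ⟨rfl, rfl⟩
  · rfl
  · exact absurd hab.1 hcd.2

lemma stc9_cutCount (ω : Sym2 (Fin n) → Bool) (S : Finset (Fin n)) :
    cutCount (graphOf ω) ↑S = ((stc9CrossPairs S).filter (fun e => ω e = true)).card := by
  rw [cutCount, ← Set.ncard_coe_finset]
  congr 1
  ext e
  simp only [Finset.coe_filter, Set.mem_setOf_eq, stc9_mem_crossPairs, graphOf,
    SimpleGraph.edgeSet_fromEdgeSet, Set.mem_diff, Set.mem_setOf_eq, Finset.mem_coe]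
  constructor
  · rintro ⟨⟨hω, -⟩, a, b, rfl, ha, hb⟩
    exact ⟨⟨a, b, rfl, ha, hb⟩, hω⟩
  · rintro ⟨⟨a, b, rfl, ha, hb⟩, hω⟩
    refine ⟨⟨hω, ?_⟩, a, b, rfl, ha, hb⟩
    simp only [Sym2.mem_diagSet, Sym2.mk_isDiag_iff]
    rintro rfl; exact hb ha

lemma stc9_measure_singleton (n : ℕ) (p : ℝ) (hp0 : 0 ≤ p) (hp2 : p ≤ 1)
    (ω : Sym2 (Fin n) → Bool) :
    erdosRenyi n p {ω} = ENNReal.ofReal (∏ e, (if ω e then p else 1 - p)) := by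
  have hq : Real.toNNReal p ≤ 1 := by
    simpa using Real.toNNReal_le_toNNReal hp2
  have h1 : ({ω} : Set (Sym2 (Fin n) → Bool)) = Set.pi Set.univ (fun e => {ω e}) := by
    ext g; simp [Set.mem_pi, funext_iff]
  rw [erdosRenyi, h1, MeasureTheory.Measure.pi_pi,
    ENNReal.ofReal_prod_of_nonneg (fun e _ => by split <;> linarith)]
  refine Finset.prod_congr rfl fun e _ => ?_
  rw [PMF.toMeasure_apply_singleton _ _ (measurableSet_singleton _), PMF.bernoulli_apply,
    min_eq_left hq]
  cases h : ω e
  · rw [if_neg (by simp), ENNReal.ofReal_sub _ hp0, ENNReal.ofReal_one]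
    rfl
  · simp
    rfl

lemma stc9_measure_le_sum {Ω : Type*} [Fintype Ω] [MeasurableSpace Ω] (μ : Measure Ω)
    (E : Set Ω) [DecidablePred (· ∈ E)] :
    μ E ≤ ∑ ω ∈ Finset.univ.filter (fun ω => ω ∈ E), μ {ω} := by
  refine le_trans (measure_mono ?_) (measure_biUnion_finset_le _ _)
  intro x hx
  simp only [Set.mem_iUnion]
  exact ⟨x, by simpa using hx, rfl⟩

lemma stc9_perS (n : ℕ) (p : ℝ) (hn : 4 ≤ n) (hp0 : 0 ≤ p) (hp2 : p ≤ 1)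
    (hp1 : 32 * Real.log n / n ≤ p) (S : Finset (Fin n)) (hScard : (S.card : ℝ) ≤ n / 2) :
    erdosRenyi n p {ω : Sym2 (Fin n) → Bool |
        (cutCount (graphOf ω) ↑S : ℝ) < p / 2 * S.card * ((n : ℝ) - S.card)} ≤
      ENNReal.ofReal ((1 / (n : ℝ) ^ 2) ^ S.card) := by
  classical
  set C : Finset (Sym2 (Fin n)) := stc9CrossPairs S with hC
  set m : ℕ := C.card with hm
  set a : ℝ := p / 2 * S.card * ((n : ℝ) - S.card) with ha
  set E : Set (Sym2 (Fin n) → Bool) :=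
    {ω | (cutCount (graphOf ω) ↑S : ℝ) < a} with hE
  set wR : Bool → ℝ := fun b => if b then p else 1 - p with hwR
  set fR : Sym2 (Fin n) → Bool → ℝ :=
    fun e b => if e ∈ C then (if b then p / 2 else 1 - p) else wR b with hfR
  have hwR0 : ∀ b, 0 ≤ wR b := fun b => by simp only [hwR]; split <;> linarith
  have hfR0 : ∀ e b, 0 ≤ fR e b := fun e b => by
    simp only [hfR]; split
    · split <;> linarith
    · exact hwR0 b
  -- basic numeric facts
  have hn0 : (0 : ℝ) < n := by positivity
  have hsn : S.card ≤ n := S.card_le_univ.trans_eq (by simp)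
  have hmR : (m : ℝ) = S.card * ((n : ℝ) - S.card) := by
    rw [hm, hC, stc9_card_crossPairs]
    push_cast [Nat.cast_sub hsn]
    ring
  have ha2 : a = p * m / 2 := by rw [ha, hmR]; ring
  have hL : 0 ≤ Real.log n := Real.log_nonneg (by exact_mod_cast (by omega : 1 ≤ n))
  -- the key pointwise identity
  set k : (Sym2 (Fin n) → Bool) → ℕ := fun ω => (C.filter (fun e => ω e = true)).card with hk
  have hkey : ∀ ω : Sym2 (Fin n) → Bool,
      (∏ e, wR (ω e)) = 2 ^ (k ω) * ∏ e, fR e (ω e) := by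
    intro ω
    rw [← Finset.prod_mul_prod_compl C (fun e => wR (ω e)),
        ← Finset.prod_mul_prod_compl C (fun e => fR e (ω e))]
    have h1 : ∏ e ∈ Cᶜ, fR e (ω e) = ∏ e ∈ Cᶜ, wR (ω e) :=
      Finset.prod_congr rfl fun e he => by
        simp only [hfR, if_neg (Finset.mem_compl.mp he)]
    have h2 : ∏ e ∈ C, wR (ω e) = 2 ^ (k ω) * ∏ e ∈ C, fR e (ω e) := by
      have heq : ∀ e ∈ C, wR (ω e) = (if ω e then (2:ℝ) else 1) * fR e (ω e) := by
        intro e he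
        simp only [hwR, hfR, if_pos he]
        cases ω e <;> norm_num <;> ring
      rw [Finset.prod_congr rfl heq, Finset.prod_mul_distrib]
      congr 1
      rw [← Finset.prod_filter_mul_prod_filter_not C (fun e => ω e = true)]
      have hA : ∏ e ∈ C.filter (fun e => ω e = true), (if ω e then (2:ℝ) else 1)
          = 2 ^ (k ω) := by
        rw [Finset.prod_congr rfl (fun e he => if_pos (Finset.mem_filter.mp he).2),
          Finset.prod_const]
      have hB : ∏ e ∈ C.filter (fun e => ¬ (ω e = true)), (if ω e then (2:ℝ) else 1) = 1 := by
        rw [Finset.prod_congr rfl (fun e he => if_neg (Finset.mem_filter.mp he).2),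
          Finset.prod_const, one_pow]
      rw [hA, hB, mul_one]
    rw [h1, h2]; ring
  -- sum of the tilted weights over everything
  have hsumf : (∑ ω : Sym2 (Fin n) → Bool, ∏ e, fR e (ω e)) = (1 - p/2) ^ m := by
    rw [← Fintype.piFinset_univ, ← Finset.prod_univ_sum]
    have hb : ∀ e : Sym2 (Fin n), (∑ b ∈ (Finset.univ : Finset Bool), fR e b)
        = if e ∈ C then 1 - p/2 else 1 := by
      intro e
      rw [Fintype.sum_bool]
      simp only [hfR, hwR]
      split <;> norm_num <;> ring
    rw [Finset.prod_congr rfl fun e _ => hb e, Finset.prod_ite_mem, Finset.univ_inter,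
      Finset.prod_const]
  -- measure bound via Chernoff
  have hμ : erdosRenyi n p E ≤ ENNReal.ofReal (2 ^ a * (1 - p/2) ^ m) := by
    refine le_trans (stc9_measure_le_sum _ E) ?_
    have hterm : ∀ ω ∈ Finset.univ.filter (fun ω => ω ∈ E),
        erdosRenyi n p {ω} = ENNReal.ofReal (∏ e, wR (ω e)) := fun ω _ =>
      stc9_measure_singleton n p hp0 hp2 ω
    rw [Finset.sum_congr rfl hterm, ← ENNReal.ofReal_sum_of_nonneg
      (fun ω _ => Finset.prod_nonneg fun e _ => hwR0 _)]
    apply ENNReal.ofReal_le_ofReal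
    calc ∑ ω ∈ Finset.univ.filter (fun ω => ω ∈ E), ∏ e, wR (ω e)
        ≤ ∑ ω ∈ Finset.univ.filter (fun ω => ω ∈ E), 2 ^ a * ∏ e, fR e (ω e) := by
          refine Finset.sum_le_sum fun ω hω => ?_
          rw [hkey ω]
          refine mul_le_mul_of_nonneg_right ?_ (Finset.prod_nonneg fun e _ => hfR0 _ _)
          have hka : (k ω : ℝ) < a := by
            have h9 := (Finset.mem_filter.mp hω).2
            rw [hE, Set.mem_setOf_eq, stc9_cutCount] at h9
            exact h9
          calc (2:ℝ) ^ (k ω) = (2:ℝ) ^ ((k ω : ℝ)) := (Real.rpow_natCast 2 _).symm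
            _ ≤ 2 ^ a := Real.rpow_le_rpow_of_exponent_le one_le_two hka.le
      _ ≤ ∑ ω : Sym2 (Fin n) → Bool, 2 ^ a * ∏ e, fR e (ω e) :=
          Finset.sum_le_sum_of_subset_of_nonneg (Finset.filter_subset _ _)
            fun ω _ _ => mul_nonneg (Real.rpow_nonneg (by norm_num) _)
              (Finset.prod_nonneg fun e _ => hfR0 _ _)
      _ = 2 ^ a * (1 - p/2) ^ m := by rw [← Finset.mul_sum, hsumf]
  refine le_trans hμ (ENNReal.ofReal_le_ofReal ?_)
  -- the analytic inequality
  have h1p : (0:ℝ) ≤ 1 - p/2 := by linarith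
  have hstep1 : (1 - p/2) ^ m ≤ Real.exp (-(p/2) * m) :=
    calc (1 - p/2) ^ m ≤ Real.exp (-(p/2)) ^ m :=
          pow_le_pow_left₀ h1p (by nlinarith [Real.add_one_le_exp (-(p/2))]) m
      _ = Real.exp ((m:ℝ) * (-(p/2))) := (Real.exp_nat_mul _ m).symm
      _ = Real.exp (-(p/2) * m) := by rw [mul_comm]
  have hstep2 : (2:ℝ) ^ a = Real.exp (Real.log 2 * a) := Real.rpow_def_of_pos two_pos a
  have hpM : 16 * (S.card:ℝ) * Real.log n ≤ p * m := by
    have h5 : (n:ℝ)/2 ≤ (n:ℝ) - S.card := by linarith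
    have h6 : (S.card:ℝ) * ((n:ℝ)/2) ≤ (m:ℝ) := by
      rw [hmR]; exact mul_le_mul_of_nonneg_left h5 (Nat.cast_nonneg _)
    have h7 : (32 * Real.log n / n) * ((S.card:ℝ) * ((n:ℝ)/2)) ≤ p * m :=
      mul_le_mul hp1 h6 (by positivity) hp0
    calc 16 * (S.card:ℝ) * Real.log n
        = (32 * Real.log n / n) * ((S.card:ℝ) * ((n:ℝ)/2)) := by field_simp; ring
      _ ≤ p * m := h7
  have hsL : 0 ≤ (S.card:ℝ) * Real.log n := mul_nonneg (Nat.cast_nonneg _) hL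
  have hexp : Real.log 2 * a + (-(p/2) * m) ≤ -(2 * S.card * Real.log n) := by
    have hlog2 : Real.log 2 < 0.6931471808 := Real.log_two_lt_d9
    have hpm0 : 0 ≤ p * (m:ℝ) := mul_nonneg hp0 (Nat.cast_nonneg _)
    have h8 : p * (m:ℝ) / 4 ≤ p * m * (1 - Real.log 2) := by nlinarith
    rw [ha2]
    nlinarith
  have hfinal : Real.exp (-(2 * S.card * Real.log n)) = (1 / (n:ℝ)^2) ^ S.card := by
    have hx : (0:ℝ) < 1 / (n:ℝ)^2 := by positivity
    rw [← Real.exp_log hx, ← Real.exp_nat_mul]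
    congr 1
    rw [one_div, Real.log_inv, Real.log_pow]
    push_cast
    ring
  calc (2:ℝ) ^ a * (1 - p/2) ^ m
      ≤ Real.exp (Real.log 2 * a) * Real.exp (-(p/2) * m) := by
        rw [hstep2]
        exact mul_le_mul_of_nonneg_left hstep1 (Real.exp_pos _).le
    _ = Real.exp (Real.log 2 * a + (-(p/2) * m)) := (Real.exp_add _ _).symm
    _ ≤ Real.exp (-(2 * S.card * Real.log n)) := Real.exp_le_exp.mpr hexp
    _ = (1 / (n:ℝ)^2) ^ S.card := hfinal

end STC9Aux


open Finset MeasureTheory in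
open STCPaper in
/-- Edge-expansion of the random graph `G(n,p)`: the probability that some set `S` with
`|S| ≤ n/2` has fewer than `(p/2)·|S|·(n−|S|)` outgoing edges is at most `2/n`. -/
theorem stmt_9 (n : ℕ) (hn : 4 ≤ n) (p : ℝ)
    (hp1 : 32 * Real.log n / n ≤ p) (hp2 : p ≤ 1) :
    erdosRenyi n p {ω | ∃ S : Finset (Fin n), (S.card : ℝ) ≤ (n : ℝ) / 2 ∧
        (cutCount (graphOf ω) ↑S : ℝ) < p / 2 * S.card * ((n : ℝ) - S.card)} ≤
      ENNReal.ofReal (2 / n) := by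
  classical
  have hn0 : (0:ℝ) < n := by positivity
  have hn4 : (4:ℝ) ≤ n := by exact_mod_cast hn
  have hp0 : 0 ≤ p :=
    le_trans (div_nonneg (mul_nonneg (by norm_num)
      (Real.log_nonneg (by exact_mod_cast (by omega : 1 ≤ n)))) hn0.le) hp1
  set 𝒮 : Finset (Finset (Fin n)) :=
    Finset.univ.filter (fun S => S.Nonempty ∧ (S.card : ℝ) ≤ (n:ℝ) / 2) with h𝒮
  set ES : Finset (Fin n) → Set (Sym2 (Fin n) → Bool) := fun S =>
    {ω | (cutCount (graphOf ω) ↑S : ℝ) < p / 2 * S.card * ((n : ℝ) - S.card)} with hES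
  have hsub : {ω | ∃ S : Finset (Fin n), (S.card : ℝ) ≤ (n : ℝ) / 2 ∧
      (cutCount (graphOf ω) ↑S : ℝ) < p / 2 * S.card * ((n : ℝ) - S.card)}
      ⊆ ⋃ S ∈ 𝒮, ES S := by
    intro ω hω
    obtain ⟨S, hc, hcut⟩ := hω
    have hne : S.Nonempty := by
      rw [Finset.nonempty_iff_ne_empty]
      rintro rfl
      simp only [Finset.card_empty, Nat.cast_zero, mul_zero, zero_mul, mul_comm] at hcut
      exact absurd hcut (by push_neg; positivity)
    exact Set.mem_biUnion
      (show S ∈ 𝒮 from Finset.mem_filter.mpr ⟨Finset.mem_univ _, hne, hc⟩) hcut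
  have hx0 : (0:ℝ) ≤ 1 / (n:ℝ)^2 := by positivity
  calc erdosRenyi n p _ ≤ erdosRenyi n p (⋃ S ∈ 𝒮, ES S) := measure_mono hsub
    _ ≤ ∑ S ∈ 𝒮, erdosRenyi n p (ES S) := measure_biUnion_finset_le _ _
    _ ≤ ∑ S ∈ 𝒮, ENNReal.ofReal ((1 / (n : ℝ) ^ 2) ^ S.card) :=
        Finset.sum_le_sum fun S hS =>
          stc9_perS n p hn hp0 hp2 hp1 S ((Finset.mem_filter.mp hS).2.2)
    _ ≤ ENNReal.ofReal (2 / n) := by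
        rw [← ENNReal.ofReal_sum_of_nonneg (fun S _ => pow_nonneg hx0 _)]
        apply ENNReal.ofReal_le_ofReal
        -- sum over nonempty sets of x^|S|  ≤ 2/n
        have hsubset : 𝒮 ⊆ Finset.univ.erase ∅ := by
          intro S hS
          exact Finset.mem_erase.mpr
            ⟨Finset.nonempty_iff_ne_empty.mp (Finset.mem_filter.mp hS).2.1, Finset.mem_univ _⟩
        refine le_trans (Finset.sum_le_sum_of_subset_of_nonneg hsubset
          fun S _ _ => pow_nonneg hx0 _) ?_
        have htot : (∑ S : Finset (Fin n), (1 / (n:ℝ)^2) ^ S.card)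
            = (1 / (n:ℝ)^2 + 1) ^ n := by
          have := Finset.prod_add (fun _ : Fin n => 1 / (n:ℝ)^2) (fun _ => (1:ℝ)) Finset.univ
          simp only [Finset.prod_const, Finset.prod_const_one, mul_one, Finset.card_univ,
            Fintype.card_fin, Finset.powerset_univ, one_pow] at this
          rw [this]
        have herase : (∑ S ∈ Finset.univ.erase (∅ : Finset (Fin n)), (1 / (n:ℝ)^2) ^ S.card)
            = (1 / (n:ℝ)^2 + 1) ^ n - 1 := by
          rw [Finset.sum_erase_eq_sub (Finset.mem_univ ∅), htot]
          simp
        rw [herase]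
        -- (1 + x)^n - 1 ≤ 2/n
        have hb1 : (1 / (n:ℝ)^2 + 1) ^ n ≤ Real.exp (1 / (n:ℝ)) := by
          calc (1 / (n:ℝ)^2 + 1) ^ n ≤ Real.exp (1 / (n:ℝ)^2) ^ n :=
              pow_le_pow_left₀ (by positivity) (Real.add_one_le_exp _) n
            _ = Real.exp ((n:ℝ) * (1 / (n:ℝ)^2)) := (Real.exp_nat_mul _ n).symm
            _ = Real.exp (1 / (n:ℝ)) := by congr 1; field_simp
        have hb2 : Real.exp (1 / (n:ℝ)) ≤ 1 + 2 / (n:ℝ) := by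
          have ht0 : (0:ℝ) < 1 / n := by positivity
          have ht4 : 1 / (n:ℝ) ≤ 1 / 4 := by
            rw [div_le_div_iff₀ hn0 (by norm_num)]; linarith
          have h7 : 1 - 1 / (n:ℝ) ≤ Real.exp (-(1/n)) := by
            nlinarith [Real.add_one_le_exp (-(1/(n:ℝ)))]
          have h8 : (0:ℝ) < 1 - 1/(n:ℝ) := by linarith
          have h9 : Real.exp (1/(n:ℝ)) ≤ (1 - 1/(n:ℝ))⁻¹ := by
            have := inv_anti₀ h8 h7
            rwa [Real.exp_neg, inv_inv] at this
          have h11 : (1 - 1/(n:ℝ))⁻¹ ≤ 1 + 2/n := by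
            rw [inv_eq_one_div, div_le_iff₀ h8]
            have hm1 : (1 + 2/(n:ℝ)) * (1 - 1/(n:ℝ)) = 1 + 1/(n:ℝ) - 2/(n:ℝ)^2 := by
              field_simp
              ring
            have hm2 : 2/(n:ℝ)^2 ≤ 1/(n:ℝ) := by
              rw [div_le_div_iff₀ (by positivity) hn0]
              nlinarith
            linarith
          linarith
        linarith
end

section
/- There exists an integer n₀ such that for every n ≥ n₀ and every real p with 64·(ln n)/n ≤ p ≤ 1, in the Erdős–Rényi random graph G(n,p) the following holds with probability at least 1 − e^{−n/16}: every vertex set S with |S| = ⌈1/p⌉ satisfies |N(S)| ≥ n/25. -/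
open SimpleGraph

open MeasureTheory Finset
open scoped ENNReal

open STCPaper in
lemma er_cylinder (n : ℕ) (p : ℝ) (hp0 : 0 ≤ p) (hp1 : p ≤ 1)
    (E : Finset (Sym2 (Fin n))) :
    erdosRenyi n p {ω | ∀ e ∈ E, ω e = false} = ENNReal.ofReal ((1 - p) ^ E.card) := by
  classical
  have hq : min (Real.toNNReal p) 1 = Real.toNNReal p :=
    min_eq_left (Real.toNNReal_le_one.2 hp1)
  have hset : {ω : Sym2 (Fin n) → Bool | ∀ e ∈ E, ω e = false}
      = Set.pi Set.univ (fun e => if e ∈ E then ({false} : Set Bool) else Set.univ) := by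
    ext ω
    simp only [Set.mem_setOf_eq, Set.mem_pi, Set.mem_univ, forall_true_left]
    constructor
    · intro h e
      by_cases he : e ∈ E <;> simp [he, h e]
    · intro h e he
      have := h e
      simpa [he] using this
  rw [erdosRenyi, hset, MeasureTheory.Measure.pi_pi]
  have hb : ∀ e : Sym2 (Fin n),
      (PMF.bernoulli (min (Real.toNNReal p) 1) (min_le_right _ _)).toMeasure
        (if e ∈ E then ({false} : Set Bool) else Set.univ)
      = if e ∈ E then ENNReal.ofReal (1 - p) else 1 := by
    intro e
    by_cases he : e ∈ E
    · simp only [he, if_true]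
      rw [PMF.toMeasure_apply_singleton _ _ (measurableSet_singleton _)]
      rw [PMF.bernoulli_apply, hq]
      simp [ENNReal.ofReal_sub 1 hp0]; rfl
    · simp only [he, if_false, measure_univ]
  simp only [hb]
  rw [Finset.prod_ite_mem Finset.univ E (fun _ => ENNReal.ofReal (1 - p)),
    Finset.univ_inter, Finset.prod_const, ← ENNReal.ofReal_pow (by linarith)]

set_option maxHeartbeats 1000000 in
open STCPaper in
/-- With probability at least `1 − e^{−n/16}`, every set `S` of size `⌈1/p⌉` in `G(n,p)`
satisfies `|N(S)| ≥ n/25`. -/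
theorem stmt_12 :
    ∃ n₀ : ℕ, ∀ n : ℕ, n₀ ≤ n → ∀ p : ℝ,
      64 * Real.log n / n ≤ p → p ≤ 1 →
      ENNReal.ofReal (1 - Real.exp (-(n : ℝ) / 16)) ≤
        erdosRenyi n p {ω | ∀ S : Finset (Fin n), S.card = ⌈1 / p⌉₊ →
          (n : ℝ) / 25 ≤ (nbrCount (graphOf ω) ↑S : ℝ)} := by
  classical
  refine ⟨100000, fun n hn p hpl hpu => ?_⟩
  have hn1 : (100000 : ℝ) ≤ (n : ℝ) := by exact_mod_cast hn
  have hnpos : (0 : ℝ) < n := by linarith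
  have hlog1 : (1 : ℝ) ≤ Real.log n := by
    rw [Real.le_log_iff_exp_le hnpos]
    have := Real.exp_one_lt_d9
    linarith
  have hlogpos : (0 : ℝ) < Real.log n := by linarith
  have hp0 : 0 < p := lt_of_lt_of_le (by positivity) hpl
  set sz := ⌈1 / p⌉₊ with hsz
  set t := n / 25 with htdef
  set m := n - sz - t with hmdef
  -- real bounds
  have hps : 1 ≤ p * sz := by
    have h1 := Nat.le_ceil (1 / p)
    have : 1 / p ≤ (sz : ℝ) := h1
    calc (1 : ℝ) = p * (1 / p) := by field_simp
      _ ≤ p * sz := by nlinarith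
  have hinvp : 1 / p ≤ (n : ℝ) / (64 * Real.log n) := by
    rw [div_le_div_iff₀ hp0 (by positivity)]
    have := mul_le_mul_of_nonneg_right hpl (le_of_lt hnpos)
    calc 1 * (64 * Real.log n) = (64 * Real.log n / n) * n := by field_simp
      _ ≤ p * n := by nlinarith
      _ = n * p := by ring
  have hszlog : (sz : ℝ) * Real.log n ≤ (n : ℝ) / 64 + Real.log n := by
    have hceil : (sz : ℝ) < 1 / p + 1 := Nat.ceil_lt_add_one (by positivity)
    have h2 : (1 / p) * Real.log n ≤ (n : ℝ) / 64 := by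
      have := mul_le_mul_of_nonneg_right hinvp hlogpos.le
      calc (1 / p) * Real.log n ≤ ((n : ℝ) / (64 * Real.log n)) * Real.log n := this
        _ = n / 64 := by field_simp
    nlinarith
  have hszle : (sz : ℝ) ≤ (n : ℝ) / 64 + 1 := by
    have hceil : (sz : ℝ) < 1 / p + 1 := Nat.ceil_lt_add_one (by positivity)
    have : 1 / p ≤ (n : ℝ) / 64 := by
      calc 1 / p ≤ (n : ℝ) / (64 * Real.log n) := hinvp
        _ ≤ (n : ℝ) / 64 := by
          apply div_le_div_of_nonneg_left hnpos.le (by norm_num) (by nlinarith)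
    linarith
  have hlog100 : Real.log n ≤ (n : ℝ) / 100 := by
    have h1 : Real.log n = 2 * Real.log (Real.sqrt n) := by
      rw [Real.log_sqrt hnpos.le]; ring
    have h2 : Real.log (Real.sqrt n) ≤ Real.sqrt n - 1 :=
      Real.log_le_sub_one_of_pos (Real.sqrt_pos.2 hnpos)
    have h3 : Real.sqrt n ≤ (n : ℝ) / 200 := by
      rw [show (n : ℝ) / 200 = Real.sqrt (((n : ℝ) / 200) ^ 2) from
        (Real.sqrt_sq (by positivity)).symm]
      apply Real.sqrt_le_sqrt
      nlinarith
    linarith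
  have htle : (t : ℝ) ≤ (n : ℝ) / 25 := by
    have := Nat.cast_div_le (m := n) (n := 25) (α := ℝ)
    simpa using this
  have hmge : (n : ℝ) - sz - t ≤ (m : ℝ) := by
    have h1 : n ≤ m + (sz + t) := by
      rw [hmdef, Nat.sub_sub]
      exact le_tsub_add
    have h1' : (n : ℝ) ≤ (m : ℝ) + ((sz : ℝ) + (t : ℝ)) := by exact_mod_cast h1
    linarith
  -- measure part
  haveI hIP : IsProbabilityMeasure (erdosRenyi n p) := by
    unfold erdosRenyi; infer_instance
  set Gd := {ω : Sym2 (Fin n) → Bool | ∀ S : Finset (Fin n), S.card = sz →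
      (n : ℝ) / 25 ≤ (nbrCount (graphOf ω) ↑S : ℝ)} with hGddef
  set ES : Finset (Fin n) → Finset (Fin n) → Finset (Sym2 (Fin n)) :=
    fun S W => (S ×ˢ W).image (fun q => s(q.1, q.2)) with hESdef
  have hsub : Gdᶜ ⊆ ⋃ S ∈ powersetCard sz (univ : Finset (Fin n)),
      ⋃ W ∈ powersetCard m (univ \ S), {ω | ∀ e ∈ ES S W, ω e = false} := by
    intro ω hω
    simp only [hGddef, Set.mem_compl_iff, Set.mem_setOf_eq, not_forall] at hω
    obtain ⟨S, hScard, hSlt⟩ := hω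
    push_neg at hSlt
    set Nf := univ.filter (fun v => v ∉ S ∧ ∃ u ∈ S, (graphOf ω).Adj u v) with hNfdef
    have hNfc : nbrCount (graphOf ω) ↑S = Nf.card := by
      rw [nbrCount, show {v | v ∉ (↑S : Set (Fin n)) ∧ ∃ u ∈ (↑S : Set (Fin n)),
          (graphOf ω).Adj u v} = ↑Nf from ?_, Set.ncard_coe_finset]
      ext v
      simp [hNfdef]
    have hNft : Nf.card ≤ t := by
      rw [htdef, Nat.le_div_iff_mul_le (by norm_num)]
      have hr : ((Nf.card * 25 : ℕ) : ℝ) < (n : ℕ) := by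
        push_cast
        rw [← hNfc]
        nlinarith
      exact_mod_cast hr.le
    have hNfsub : Nf ⊆ univ \ S := by
      intro v hv
      rw [hNfdef, mem_filter] at hv
      rw [mem_sdiff]
      exact ⟨mem_univ _, hv.2.1⟩
    have hBcard : m ≤ ((univ \ S) \ Nf).card := by
      rw [card_sdiff_of_subset hNfsub, card_sdiff_of_subset (subset_univ S), card_univ, Fintype.card_fin, hScard]
      exact Nat.sub_le_sub_left hNft _
    obtain ⟨W, hWB, hWcard⟩ := exists_subset_card_eq hBcard
    have hWsub : W ⊆ univ \ S := hWB.trans (sdiff_subset)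
    simp only [Set.mem_iUnion, Set.mem_setOf_eq]
    refine ⟨S, mem_powersetCard.2 ⟨subset_univ _, hScard⟩,
      W, mem_powersetCard.2 ⟨hWsub, hWcard⟩, ?_⟩
    intro e he
    simp only [hESdef, mem_image, mem_product] at he
    obtain ⟨⟨u, v⟩, ⟨hu, hv⟩, rfl⟩ := he
    have hvB := hWB hv
    rw [mem_sdiff, mem_sdiff] at hvB
    have hvS : v ∉ S := hvB.1.2
    have hvNf : v ∉ Nf := hvB.2
    have hne : u ≠ v := fun h => hvS (h ▸ hu)
    cases hb : ω s(u, v) with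
    | false => rfl
    | true =>
      exfalso
      have hadj : (graphOf ω).Adj u v := by
        rw [graphOf, SimpleGraph.fromEdgeSet_adj]
        exact ⟨hb, hne⟩
      exact hvNf (mem_filter.2 ⟨mem_univ _, hvS, u, hu, hadj⟩)
  have hcyl : ∀ S ∈ powersetCard sz (univ : Finset (Fin n)),
      ∀ W ∈ powersetCard m (univ \ S),
      erdosRenyi n p {ω | ∀ e ∈ ES S W, ω e = false}
        = ENNReal.ofReal ((1 - p) ^ (sz * m)) := by
    intro S hS W hW
    rw [er_cylinder n p hp0.le hpu]
    rw [mem_powersetCard] at hS hW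
    congr 1
    have hdisj : ∀ a ∈ S, a ∉ W := by
      intro a ha haW
      have := hW.1 haW
      rw [mem_sdiff] at this
      exact this.2 ha
    have hinj : Set.InjOn (fun q : Fin n × Fin n => s(q.1, q.2)) ↑(S ×ˢ W) := by
      rintro ⟨a, b⟩ hab ⟨c, d⟩ hcd h
      rw [coe_product, Set.mem_prod] at hab hcd
      simp only [Sym2.eq_iff] at h
      rcases h with ⟨h1, h2⟩ | ⟨h1, h2⟩
      · rw [h1, h2]
      · exact absurd (h1 ▸ hcd.2) (hdisj a hab.1)
    rw [hESdef, card_image_of_injOn hinj, card_product, hS.2, hW.2]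
  have hchoose2 : ∀ k N : ℕ, N.choose k ≤ 2 ^ N := by
    intro k N
    rcases le_or_gt k N with h | h
    · have h1 : N.choose k ≤ ∑ i ∈ range (N + 1), N.choose i :=
        Finset.single_le_sum (f := fun i => N.choose i) (fun i _ => Nat.zero_le _)
          (mem_range.2 (Nat.lt_succ_of_le h))
      rwa [Nat.sum_range_choose] at h1
    · rw [Nat.choose_eq_zero_of_lt h]; exact Nat.zero_le _
  have hreal : ((n.choose sz : ℕ) : ℝ) * (((2 ^ n : ℕ) : ℝ) * (1 - p) ^ (sz * m))
      ≤ Real.exp (-(n : ℝ) / 16) := by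
    have h1 : ((n.choose sz : ℕ) : ℝ) ≤ Real.exp ((sz : ℝ) * Real.log n) := by
      calc ((n.choose sz : ℕ) : ℝ) ≤ ((n ^ sz : ℕ) : ℝ) := by
            exact_mod_cast Nat.choose_le_pow n sz
        _ = (n : ℝ) ^ sz := by push_cast; ring
        _ = Real.exp ((sz : ℝ) * Real.log n) := by
            rw [Real.exp_nat_mul, Real.exp_log hnpos]
    have h2 : (((2 : ℕ) ^ n : ℕ) : ℝ) = Real.exp ((n : ℝ) * Real.log 2) := by
      rw [Real.exp_nat_mul, Real.exp_log (by norm_num : (0:ℝ) < 2)]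
      push_cast; ring
    have h3 : (1 - p) ^ (sz * m) ≤ Real.exp (-(m : ℝ)) := by
      have ha : (1 - p) ^ (sz * m) ≤ Real.exp (-p) ^ (sz * m) := by
        apply pow_le_pow_left₀ (by linarith)
        have := Real.add_one_le_exp (-p)
        linarith
      have hb : Real.exp (-p) ^ (sz * m) = Real.exp (((sz * m : ℕ) : ℝ) * (-p)) :=
        (Real.exp_nat_mul _ _).symm
      have hc : ((sz * m : ℕ) : ℝ) * (-p) ≤ -(m : ℝ) := by
        push_cast
        have hm0 : (0 : ℝ) ≤ (m : ℝ) := Nat.cast_nonneg m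
        nlinarith
      calc (1 - p) ^ (sz * m) ≤ Real.exp (((sz * m : ℕ) : ℝ) * (-p)) := hb ▸ ha
        _ ≤ Real.exp (-(m : ℝ)) := Real.exp_le_exp.2 hc
    have hpow0 : (0 : ℝ) ≤ (1 - p) ^ (sz * m) := pow_nonneg (by linarith) _
    calc ((n.choose sz : ℕ) : ℝ) * (((2 ^ n : ℕ) : ℝ) * (1 - p) ^ (sz * m))
        ≤ Real.exp ((sz : ℝ) * Real.log n) *
            (Real.exp ((n : ℝ) * Real.log 2) * Real.exp (-(m : ℝ))) := by
          exact mul_le_mul h1 (mul_le_mul (le_of_eq h2) h3 hpow0 (Real.exp_pos _).le)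
            (mul_nonneg (Nat.cast_nonneg _) hpow0) (Real.exp_pos _).le
      _ = Real.exp ((sz : ℝ) * Real.log n + ((n : ℝ) * Real.log 2 + -(m : ℝ))) := by
          rw [Real.exp_add, Real.exp_add]
      _ ≤ Real.exp (-(n : ℝ) / 16) := by
          apply Real.exp_le_exp.2
          have hlt2 := Real.log_two_lt_d9
          have hnl2 : (n : ℝ) * Real.log 2 ≤ (n : ℝ) * 0.6931471808 :=
            mul_le_mul_of_nonneg_left hlt2.le hnpos.le
          linarith
  have hbound : erdosRenyi n p Gdᶜ ≤ ENNReal.ofReal (Real.exp (-(n : ℝ) / 16)) := by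
    calc erdosRenyi n p Gdᶜ
        ≤ ∑ S ∈ powersetCard sz (univ : Finset (Fin n)),
            erdosRenyi n p (⋃ W ∈ powersetCard m (univ \ S),
              {ω | ∀ e ∈ ES S W, ω e = false}) :=
          (measure_mono hsub).trans (measure_biUnion_finset_le _ _)
      _ ≤ ∑ S ∈ powersetCard sz (univ : Finset (Fin n)),
            ∑ W ∈ powersetCard m (univ \ S),
              erdosRenyi n p {ω | ∀ e ∈ ES S W, ω e = false} :=
          Finset.sum_le_sum fun S _ => measure_biUnion_finset_le _ _
      _ = ∑ S ∈ powersetCard sz (univ : Finset (Fin n)),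
            ∑ W ∈ powersetCard m (univ \ S),
              ENNReal.ofReal ((1 - p) ^ (sz * m)) :=
          Finset.sum_congr rfl fun S hS => Finset.sum_congr rfl fun W hW => hcyl S hS W hW
      _ ≤ ((n.choose sz : ℕ) : ℝ≥0∞) * (((2 ^ n : ℕ) : ℝ≥0∞) *
            ENNReal.ofReal ((1 - p) ^ (sz * m))) := by
          calc ∑ S ∈ powersetCard sz (univ : Finset (Fin n)),
                ∑ W ∈ powersetCard m (univ \ S), ENNReal.ofReal ((1 - p) ^ (sz * m))
              ≤ ∑ S ∈ powersetCard sz (univ : Finset (Fin n)),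
                (((2 ^ n : ℕ) : ℝ≥0∞) * ENNReal.ofReal ((1 - p) ^ (sz * m))) := by
                apply Finset.sum_le_sum
                intro S _
                rw [Finset.sum_const, nsmul_eq_mul]
                apply mul_le_mul_left
                have : (powersetCard m (univ \ S)).card ≤ 2 ^ n := by
                  rw [card_powersetCard]
                  calc (univ \ S).card.choose m ≤ 2 ^ (univ \ S).card := hchoose2 _ _
                    _ ≤ 2 ^ n := Nat.pow_le_pow_right (by norm_num)
                        (le_trans (card_le_univ _) (by simp))
                exact_mod_cast this
            _ = ((n.choose sz : ℕ) : ℝ≥0∞) * (((2 ^ n : ℕ) : ℝ≥0∞) *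
                  ENNReal.ofReal ((1 - p) ^ (sz * m))) := by
                rw [Finset.sum_const, nsmul_eq_mul, card_powersetCard, card_univ,
                  Fintype.card_fin]
      _ ≤ ENNReal.ofReal (Real.exp (-(n : ℝ) / 16)) := by
          rw [show ((n.choose sz : ℕ) : ℝ≥0∞) = ENNReal.ofReal ((n.choose sz : ℕ) : ℝ) by
              rw [ENNReal.ofReal_natCast],
            show (((2 ^ n : ℕ) : ℕ) : ℝ≥0∞) = ENNReal.ofReal (((2 ^ n : ℕ) : ℕ) : ℝ) by
              rw [ENNReal.ofReal_natCast],
            ← ENNReal.ofReal_mul (Nat.cast_nonneg _), ← ENNReal.ofReal_mul (Nat.cast_nonneg _)]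
          exact ENNReal.ofReal_le_ofReal hreal
  have huniv : (1 : ℝ≥0∞) ≤ erdosRenyi n p Gd + erdosRenyi n p Gdᶜ := by
    have h := measure_union_le (μ := erdosRenyi n p) Gd Gdᶜ
    rw [Set.union_compl_self] at h
    calc (1 : ℝ≥0∞) = erdosRenyi n p Set.univ := measure_univ.symm
      _ ≤ _ := h
  have hofr : ENNReal.ofReal (1 - Real.exp (-(n : ℝ) / 16))
      = 1 - ENNReal.ofReal (Real.exp (-(n : ℝ) / 16)) := by
    rw [ENNReal.ofReal_sub _ (Real.exp_pos _).le, ENNReal.ofReal_one]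
  rw [hofr]
  refine tsub_le_iff_right.2 ?_
  calc (1 : ℝ≥0∞) ≤ erdosRenyi n p Gd + erdosRenyi n p Gdᶜ := huniv
    _ ≤ erdosRenyi n p Gd + ENNReal.ofReal (Real.exp (-(n : ℝ) / 16)) :=
        add_le_add_right hbound _
end
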